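/- arXiv:2210.10158 — 8 statements merged into one kernel-verified Lean document; each statement's English description precedes it below -/
import Mathlib

section
/- Let E be a finite-dimensional real inner product space and let α_1, …, α_r be a basis of E. Define the coroots α_i^∨ = (2/⟨α_i,α_i⟩)·α_i and let ω_1, …, ω_r ∈ E be the dual family characterized by ⟨ω_i, α_j^∨⟩ = δ_{ij} for all i, j. Let S ⊆ {1,…,r}, let E′ = span{α_i : i ∈ S}, and let p : E → E′ be the orthogonal projection onto E′. Then p(ω_i) = 0 for every i ∉ S, and for every i ∈ S one has ⟨p(ω_i), α_j^∨⟩ = δ_{ij} for all j ∈ S; that is, {p(ω_i) : i ∈ S} is the dual family in E′ to the coroots {α_j^∨ : j ∈ S}. -/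
open scoped RealInnerProductSpace

/-- **Projection of fundamental weights onto a root subsystem.**
Let `E` be a finite-dimensional real inner product space, `α 1, …, α r` a basis of `E`,
`coroot i = (2 / ⟪α i, α i⟫) • α i` the coroots, and `ω 1, …, ω r` the dual family to the
coroots, i.e. `⟪ω i, coroot j⟫ = δ_{ij}`.  For `S ⊆ {1, …, r}`, let `E'` be the span of
`{α i : i ∈ S}` and `p` the orthogonal projection onto `E'`.  Then `p (ω i) = 0` for `i ∉ S`,
and `{p (ω i) : i ∈ S}` is dual in `E'` to the coroots `{coroot j : j ∈ S}`. -/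
theorem projection_of_fundamental_weights
    {E : Type*} [NormedAddCommGroup E] [InnerProductSpace ℝ E] [FiniteDimensional ℝ E]
    {r : ℕ} (α : Fin r → E)
    (hind : LinearIndependent ℝ α) (hspan : Submodule.span ℝ (Set.range α) = ⊤)
    (coroot : Fin r → E) (hcoroot : ∀ i, coroot i = (2 / ⟪α i, α i⟫) • α i)
    (ω : Fin r → E) (hω : ∀ i j, ⟪ω i, coroot j⟫ = if i = j then 1 else 0)
    (S : Set (Fin r)) (E' : Submodule ℝ E) (hE' : E' = Submodule.span ℝ (α '' S))
    (p : E → E) (hp : ∀ v, p v = (Submodule.orthogonalProjectionOnto E' v : E)) :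
    (∀ i, i ∉ S → p (ω i) = 0) ∧
      (∀ i ∈ S, ∀ j ∈ S, ⟪p (ω i), coroot j⟫ = if i = j then 1 else 0) := by
  -- α j ≠ 0, so ⟪α j, α j⟫ ≠ 0
  have hα0 : ∀ j, (⟪α j, α j⟫ : ℝ) ≠ 0 := fun j =>
    inner_self_ne_zero.mpr (hind.ne_zero j)
  -- inner with α from inner with coroot
  have hωα : ∀ i j, i ≠ j → ⟪ω i, α j⟫ = 0 := by
    intro i j hij
    have h := hω i j
    rw [if_neg hij, hcoroot j, real_inner_smul_right] at h
    have h2 : (2 : ℝ) / ⟪α j, α j⟫ ≠ 0 := div_ne_zero two_ne_zero (hα0 j)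
    exact (mul_eq_zero.mp h).resolve_left h2
  constructor
  · intro i hi
    have hmem : ω i ∈ E'ᗮ := by
      rw [Submodule.mem_orthogonal]
      intro u hu
      rw [hE'] at hu
      induction hu using Submodule.span_induction with
      | mem x hx =>
        obtain ⟨j, hj, rfl⟩ := hx
        rw [real_inner_comm]
        exact hωα i j (fun h => hi (h ▸ hj))
      | zero => simp
      | add x y _ _ hx hy => rw [inner_add_left, hx, hy, add_zero]
      | smul c x _ hx => rw [inner_smul_left, hx, mul_zero]
    rw [hp]
    rw [Submodule.orthogonalProjectionOnto_apply_of_mem_orthogonal hmem]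
    simp
  · intro i _ j hj
    have hcmem : coroot j ∈ E' := by
      rw [hE', hcoroot]
      exact Submodule.smul_mem _ _ (Submodule.subset_span ⟨j, hj, rfl⟩)
    have hsub : ω i - p (ω i) ∈ E'ᗮ := by
      rw [hp]; exact E'.sub_starProjection_mem_orthogonal (ω i)
    have : ⟪ω i - p (ω i), coroot j⟫ = 0 :=
      Submodule.inner_left_of_mem_orthogonal hcmem hsub
    rw [inner_sub_left, sub_eq_zero] at this
    rw [← this, hω]
end

section
/- Let V be a real vector space, let m ≥ 1, and let Φ_1, …, Φ_m be pairwise disjoint finite subsets of V such that the family of subspaces (span Φ_k)_{k=1}^m is linearly independent (i.e. their sum is an internal direct sum). Let Φ = Φ_1 ∪ … ∪ Φ_m and let v_k ∈ span Φ_k for each k. Then the restriction map F ↦ (F|_{Φ_1}, …, F|_{Φ_m}) is a bijection from the set {F : Φ → ℕ : Σ_{α∈Φ} F(α)·α = v_1 + … + v_m} onto the product Π_{k=1}^m {G : Φ_k → ℕ : Σ_{α∈Φ_k} G(α)·α = v_k}. In particular, the partition count #{F : Φ → ℕ : Σ_α F(α)α = Σ_k v_k} equals the product over k of #{G : Φ_k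 → ℕ : Σ_α G(α)α = v_k}. -/
open scoped BigOperators

lemma kostant_aux_indep_zero {ι V : Type*} [Fintype ι] [DecidableEq ι]
    [AddCommGroup V] [Module ℝ V]
    {p : ι → Submodule ℝ V} (h : iSupIndep p) {w : ι → V} (hw : ∀ k, w k ∈ p k)
    (hsum : ∑ k, w k = 0) (i : ι) : w i = 0 := by
  rw [← Finset.add_sum_erase _ w (Finset.mem_univ i)] at hsum
  have h1 : w i = -∑ j ∈ Finset.univ.erase i, w j := eq_neg_of_add_eq_zero_left hsum
  have h2 : w i ∈ ⨆ j ≠ i, p j := by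
    rw [h1]
    refine Submodule.neg_mem _ (Submodule.sum_mem _ fun j hj => ?_)
    exact Submodule.mem_iSup_of_mem j
      (Submodule.mem_iSup_of_mem (Finset.ne_of_mem_erase hj) (hw j))
  exact (Submodule.disjoint_def.mp (h i)) _ (hw i) h2

/-- **Factorization of Kostant-type partition counts over a direct-sum decomposition.**
Let `V` be a real vector space and `Φ 1, …, Φ m` pairwise disjoint finite subsets of `V`
whose spans form an independent family of subspaces.  Let `v k ∈ span (Φ k)` for each `k`.
Then restriction gives a bijection from
`{F : Φ → ℕ | ∑_{a ∈ Φ} F a • a = ∑ k, v k}` (where `Φ = ⋃ k, Φ k`) onto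
`∏ k {G : Φ k → ℕ | ∑_{a ∈ Φ k} G a • a = v k}`; in particular the cardinalities satisfy
the corresponding product formula. -/
theorem kostant_partition_count_factors
    {V : Type*} [AddCommGroup V] [Module ℝ V] [DecidableEq V]
    {m : ℕ} (hm : 1 ≤ m) (Φ : Fin m → Finset V)
    (hdisj : ∀ k l, k ≠ l → Disjoint (Φ k) (Φ l))
    (hindep : iSupIndep fun k => Submodule.span ℝ ((Φ k : Set V)))
    (v : Fin m → V) (hv : ∀ k, v k ∈ Submodule.span ℝ ((Φ k : Set V))) :
    Set.BijOn
      (fun (F : ↥(Finset.univ.biUnion Φ) → ℕ) (k : Fin m) (a : ↥(Φ k)) =>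
        F ⟨a.1, Finset.mem_biUnion.mpr ⟨k, Finset.mem_univ k, a.2⟩⟩)
      {F : ↥(Finset.univ.biUnion Φ) → ℕ | ∑ a : ↥(Finset.univ.biUnion Φ), F a • (a : V) = ∑ k, v k}
      {G : (k : Fin m) → (↥(Φ k) → ℕ) | ∀ k, ∑ a : ↥(Φ k), G k a • (a : V) = v k} ∧
    Set.ncard
        {F : ↥(Finset.univ.biUnion Φ) → ℕ |
          ∑ a : ↥(Finset.univ.biUnion Φ), F a • (a : V) = ∑ k, v k} =
      ∏ k, Set.ncard {G : ↥(Φ k) → ℕ | ∑ a : ↥(Φ k), G a • (a : V) = v k} := by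
  classical
  set U : Finset V := Finset.univ.biUnion Φ with hU
  -- key sum decomposition
  have key : ∀ F : ↥U → ℕ,
      ∑ a : ↥U, F a • (a : V) =
        ∑ k, ∑ a : ↥(Φ k), F ⟨a.1, Finset.mem_biUnion.mpr ⟨k, Finset.mem_univ k, a.2⟩⟩ • (a : V) := by
    intro F
    set g : V → V := fun a => if h : a ∈ U then F ⟨a, h⟩ • a else 0 with hg
    have h1 : ∑ a : ↥U, F a • (a : V) = ∑ a ∈ U, g a := by
      rw [← Finset.sum_coe_sort U g]
      refine Finset.sum_congr rfl fun a _ => ?_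
      simp [hg, a.2]
    have h2 : ∀ k, ∑ a : ↥(Φ k),
        F ⟨a.1, Finset.mem_biUnion.mpr ⟨k, Finset.mem_univ k, a.2⟩⟩ • (a : V) = ∑ a ∈ Φ k, g a := by
      intro k
      rw [← Finset.sum_coe_sort (Φ k) g]
      refine Finset.sum_congr rfl fun a _ => ?_
      have ha : (a : V) ∈ U := Finset.mem_biUnion.mpr ⟨k, Finset.mem_univ k, a.2⟩
      simp [hg, ha]
    rw [h1]
    simp only [h2]
    exact Finset.sum_biUnion fun k _ l _ hkl => hdisj k l hkl
  -- membership of partial sums in spans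
  have hspan : ∀ (k : Fin m) (G : ↥(Φ k) → ℕ),
      ∑ a : ↥(Φ k), G a • (a : V) ∈ Submodule.span ℝ ((Φ k : Set V)) := by
    intro k G
    refine Submodule.sum_mem _ fun a _ => ?_
    exact (Submodule.span ℝ ((Φ k : Set V))).toAddSubmonoid.nsmul_mem
      (Submodule.subset_span a.2) (G a)
  -- the bijection
  have hbij : Set.BijOn
      (fun (F : ↥U → ℕ) (k : Fin m) (a : ↥(Φ k)) =>
        F ⟨a.1, Finset.mem_biUnion.mpr ⟨k, Finset.mem_univ k, a.2⟩⟩)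
      {F : ↥U → ℕ | ∑ a : ↥U, F a • (a : V) = ∑ k, v k}
      {G : (k : Fin m) → (↥(Φ k) → ℕ) | ∀ k, ∑ a : ↥(Φ k), G k a • (a : V) = v k} := by
    refine ⟨?_, ?_, ?_⟩
    · -- MapsTo
      intro F hF k
      have hsum : ∑ k, ((∑ a : ↥(Φ k),
          F ⟨a.1, Finset.mem_biUnion.mpr ⟨k, Finset.mem_univ k, a.2⟩⟩ • (a : V)) - v k) = 0 := by
        rw [Finset.sum_sub_distrib, ← key F, hF, sub_self]
      have := kostant_aux_indep_zero hindep
        (fun k => Submodule.sub_mem _ (hspan k _) (hv k)) hsum k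
      exact sub_eq_zero.mp this
    · -- InjOn
      intro F1 _ F2 _ h
      funext a
      obtain ⟨k, _, hk⟩ := Finset.mem_biUnion.mp a.2
      have := congrFun (congrFun h k) ⟨a.1, hk⟩
      simpa using this
    · -- SurjOn
      intro G hG
      have hsel : ∀ a : ↥U, ∃ k, a.1 ∈ Φ k := by
        intro a
        obtain ⟨k, _, hk⟩ := Finset.mem_biUnion.mp a.2
        exact ⟨k, hk⟩
      choose idx hidx using hsel
      set F : ↥U → ℕ := fun a => G (idx a) ⟨a.1, hidx a⟩ with hF
      have hFval : ∀ (k : Fin m) (a : ↥U) (h : a.1 ∈ Φ k), F a = G k ⟨a.1, h⟩ := by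
        intro k a h
        have he : idx a = k := by
          by_contra hne
          exact (Finset.disjoint_left.mp (hdisj _ _ hne) (hidx a)) h
        subst he
        rfl
      have hrest : (fun (k : Fin m) (a : ↥(Φ k)) =>
          F ⟨a.1, Finset.mem_biUnion.mpr ⟨k, Finset.mem_univ k, a.2⟩⟩) = G := by
        funext k a
        exact hFval k ⟨a.1, Finset.mem_biUnion.mpr ⟨k, Finset.mem_univ k, a.2⟩⟩ a.2
      refine ⟨F, ?_, hrest⟩
      show ∑ a : ↥U, F a • (a : V) = ∑ k, v k
      rw [key F]
      refine Finset.sum_congr rfl fun k _ => ?_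
      rw [← hG k]
      exact Finset.sum_congr rfl fun a _ => by rw [hFval k _ a.2]
  refine ⟨hbij, ?_⟩
  -- cardinality
  have hcard1 : Set.ncard {F : ↥U → ℕ | ∑ a : ↥U, F a • (a : V) = ∑ k, v k} =
      Set.ncard {G : (k : Fin m) → (↥(Φ k) → ℕ) | ∀ k, ∑ a : ↥(Φ k), G k a • (a : V) = v k} := by
    have := Nat.card_congr hbij.equiv
    simpa [Nat.card_coe_set_eq] using this
  rw [hcard1]
  have hpi : {G : (k : Fin m) → (↥(Φ k) → ℕ) | ∀ k, ∑ a : ↥(Φ k), G k a • (a : V) = v k} =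
      Set.pi Set.univ (fun k => {G : ↥(Φ k) → ℕ | ∑ a : ↥(Φ k), G a • (a : V) = v k}) := by
    ext G
    simp [Set.mem_pi]
  rw [hpi]
  rw [← Nat.card_coe_set_eq]
  rw [Nat.card_congr (Equiv.Set.univPi _)]
  rw [Nat.card_pi]
  exact Finset.prod_congr rfl fun k _ => (Nat.card_coe_set_eq _).symm
end

section
/- Let r ≥ 1 and let λ = (λ_1,…,λ_r) ∈ ℝ^r satisfy λ_1 ≥ λ_2 ≥ … ≥ λ_r ≥ 0. Let S = {i ∈ {1,…,r−1} : λ_i = λ_{i+1}} ∪ {r : if λ_r = 0}, and let V = span_ℝ{α_i : i ∈ S} ⊆ ℝ^r, where α_i are the simple roots of type B_r. Then the affine dimension of the type B/C BZ-polytope BZ_λ ⊆ ℝ^{r²} equals r² − #{α ∈ Φ⁺(B_r) : α ∈ V}. -/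
open scoped BigOperators

noncomputable section

/-- 1-based standard basis vector `e i` of `ℝ^r`. -/
def stdVec (r i : ℕ) : Fin r → ℝ := fun k => if (k : ℕ) + 1 = i then 1 else 0

/-- Type B/C BZ inequalities. -/
def IsBZBC (r : ℕ) (x y : ℕ → ℕ → ℝ) : Prop :=
  (∀ i j, 1 ≤ i → i ≤ j → j ≤ r → y i j ≤ x i j) ∧
  (∀ i j, 1 ≤ i → i < j → j ≤ r → y i j ≤ x (i + 1) j) ∧
  (∀ i j, 1 ≤ i → i ≤ j → j + 1 ≤ r → x i (j + 1) ≤ y i j ∧ x (i + 1) (j + 1) ≤ y i j) ∧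
  (∀ i, 1 ≤ i → i ≤ r → 0 ≤ y i r)

def BZsetBC (r : ℕ) (lam : ℕ → ℝ) : Set ((ℕ → ℕ → ℝ) × (ℕ → ℕ → ℝ)) :=
  {p | (∀ j, 1 ≤ j → j ≤ r → p.1 1 j = lam j) ∧ IsBZBC r p.1 p.2 ∧
       (∀ i j, ¬(1 ≤ i ∧ i ≤ j ∧ j ≤ r) → p.1 i j = 0) ∧
       (∀ i j, ¬(1 ≤ i ∧ i ≤ j ∧ j ≤ r) → p.2 i j = 0)}

def wtBC (r : ℕ) (p : (ℕ → ℕ → ℝ) × (ℕ → ℕ → ℝ)) (i : ℕ) : ℝ :=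
  (∑ j ∈ Finset.Icc i r, p.1 i j) + (∑ j ∈ Finset.Icc (i + 1) r, p.1 (i + 1) j)
    - 2 * ∑ j ∈ Finset.Icc i r, p.2 i j

def IsBZD (r : ℕ) (x y : ℕ → ℕ → ℝ) : Prop :=
  (∀ i j, 1 ≤ i → i ≤ j → j + 1 ≤ r → y i j ≤ x i j) ∧
  (∀ i j, 1 ≤ i → i < j → j + 1 ≤ r → y i j ≤ x (i + 1) j) ∧
  (∀ i j, 1 ≤ i → i ≤ j → j + 1 ≤ r → x i (j + 1) ≤ y i j ∧ x (i + 1) (j + 1) ≤ y i j) ∧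
  (∀ i, 1 ≤ i → i + 2 ≤ r → y i (r - 1) ≤ x i r + x (i + 1) r + min (x i (r - 1)) (x (i + 1) (r - 1))) ∧
  (y (r - 1) (r - 1) ≤ x (r - 1) r + x r r + x (r - 1) (r - 1))

def BZsetD (r : ℕ) (lam : ℕ → ℝ) : Set ((ℕ → ℕ → ℝ) × (ℕ → ℕ → ℝ)) :=
  {p | (∀ j, 1 ≤ j → j ≤ r → p.1 1 j = lam j) ∧ IsBZD r p.1 p.2 ∧
       (∀ i j, ¬(1 ≤ i ∧ i ≤ j ∧ j ≤ r) → p.1 i j = 0) ∧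
       (∀ i j, ¬(1 ≤ i ∧ i ≤ j ∧ j + 1 ≤ r) → p.2 i j = 0)}

def wtD (r : ℕ) (p : (ℕ → ℕ → ℝ) × (ℕ → ℕ → ℝ)) (i : ℕ) : ℝ :=
  (∑ j ∈ Finset.Icc i r, p.1 i j) + (∑ j ∈ Finset.Icc (i + 1) r, p.1 (i + 1) j)
    - 2 * ∑ j ∈ Finset.Icc i (r - 1), p.2 i j

/-- Affine dimension of a subset of a real vector space. -/
def affDim {V : Type*} [AddCommGroup V] [Module ℝ V] (A : Set V) : ℕ :=
  Module.finrank ℝ (vectorSpan ℝ A)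

def simpleRootB (r i : ℕ) : Fin r → ℝ :=
  if i = r then stdVec r r else stdVec r i - stdVec r (i + 1)

def simpleRootC (r i : ℕ) : Fin r → ℝ :=
  if i = r then (2 : ℝ) • stdVec r r else stdVec r i - stdVec r (i + 1)

def simpleRootD (r i : ℕ) : Fin r → ℝ :=
  if i = r then stdVec r (r - 1) + stdVec r r else stdVec r i - stdVec r (i + 1)

def posRootsB (r : ℕ) : Set (Fin r → ℝ) :=
  {v | ∃ i j, 1 ≤ i ∧ i < j ∧ j ≤ r ∧ (v = stdVec r i - stdVec r j ∨ v = stdVec r i + stdVec r j)}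
    ∪ {v | ∃ i, 1 ≤ i ∧ i ≤ r ∧ v = stdVec r i}

def posRootsC (r : ℕ) : Set (Fin r → ℝ) :=
  {v | ∃ i j, 1 ≤ i ∧ i < j ∧ j ≤ r ∧ (v = stdVec r i - stdVec r j ∨ v = stdVec r i + stdVec r j)}
    ∪ {v | ∃ i, 1 ≤ i ∧ i ≤ r ∧ v = (2 : ℝ) • stdVec r i}

def posRootsD (r : ℕ) : Set (Fin r → ℝ) :=
  {v | ∃ i j, 1 ≤ i ∧ i < j ∧ j ≤ r ∧ (v = stdVec r i - stdVec r j ∨ v = stdVec r i + stdVec r j)}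

/-- `f` is a quasi-polynomial of degree exactly `d` on positive integers. -/
def IsQuasiPolyOfDegree (f : ℕ → ℕ) (d : ℕ) : Prop :=
  ∃ T : ℕ, 0 < T ∧ ∃ P : ℕ → Polynomial ℚ,
    (∀ k < T, (P k).degree = (d : ℕ)) ∧ ∀ N : ℕ, 0 < N → (f N : ℚ) = (P (N % T)).eval (N : ℚ)

end

noncomputable section BZaux
open Finset
attribute [local instance] Classical.propDecidable

namespace BZaux

variable (r : ℕ) (lam : ℕ → ℝ) (S : Set ℕ)

abbrev E := (ℕ → ℕ → ℝ) × (ℕ → ℕ → ℝ)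

def FxC (t j : ℕ) : Prop := ∀ k, j + 1 ≤ k + t → k + 2 ≤ j + t → k ≤ r → k ∈ S
def FyC (t j : ℕ) : Prop := ∀ k, j + 1 ≤ k + t → k + 1 ≤ j + t → k ≤ r → k ∈ S
def cond (u w : ℕ) : Prop := ∀ k, u ≤ k → k + 1 ≤ w → k ≤ r → k ∈ S

def Lam (k : ℕ) : ℝ := if k ≤ r then lam k else 0
def gapsF : Finset ℕ := (Icc 1 r).filter (fun k => k ∉ S)
def gam : ℝ :=
  if h : (gapsF r S).Nonempty then
    ((gapsF r S).image (fun k => Lam r lam k - Lam r lam (k + 1))).min' (h.image _)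
  else 1
def Bsm (n i : ℕ) : ℝ := (∑ s ∈ range (n + 1), (n.choose s : ℝ) * Lam r lam (i + s)) / 2 ^ n
def sA : ℝ := gam r lam S / 2 ^ (2 * r + 1)

def x0 : ℕ → ℕ → ℝ := fun t j =>
  if 1 ≤ t ∧ t ≤ j ∧ j ≤ r then Bsm r lam (2 * (t - 1)) (j + 1 - t) else 0
def y0 : ℕ → ℕ → ℝ := fun t j =>
  if 1 ≤ t ∧ t ≤ j ∧ j ≤ r then Bsm r lam (2 * (t - 1) + 1) (j + 1 - t) else 0

def p0 : E := (x0 r lam, y0 r lam)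
def p1x (t j : ℕ) : E :=
  (fun a b => x0 r lam a b + if a = t ∧ b = j then sA r lam S else 0, y0 r lam)
def p1y (t j : ℕ) : E :=
  (x0 r lam, fun a b => y0 r lam a b + if a = t ∧ b = j then sA r lam S else 0)

def FXfree : Finset (ℕ × ℕ) :=
  ((Icc 1 r) ×ˢ (Icc 1 r)).filter (fun q => 2 ≤ q.1 ∧ q.1 ≤ q.2 ∧ ¬ FxC r S q.1 q.2)
def FYfree : Finset (ℕ × ℕ) :=
  ((Icc 1 r) ×ˢ (Icc 1 r)).filter (fun q => q.1 ≤ q.2 ∧ ¬ FyC r S q.1 q.2)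
def FXforced : Finset (ℕ × ℕ) :=
  ((Icc 1 r) ×ˢ (Icc 1 r)).filter (fun q => 2 ≤ q.1 ∧ q.1 ≤ q.2 ∧ FxC r S q.1 q.2)
def FYforced : Finset (ℕ × ℕ) :=
  ((Icc 1 r) ×ˢ (Icc 1 r)).filter (fun q => q.1 ≤ q.2 ∧ FyC r S q.1 q.2)

def P : Finset (ℕ × ℕ) :=
  ((Icc 1 r) ×ˢ (Icc 1 (2 * r + 1))).filter
    (fun q => q.1 < q.2 ∧ q.2 + q.1 ≤ 2 * r + 1 ∧ cond r S q.1 q.2)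

def rho (q : ℕ × ℕ) : Fin r → ℝ :=
  if q.2 ≤ r then stdVec r q.1 - stdVec r q.2
  else if q.2 = r + 1 then stdVec r q.1
  else stdVec r q.1 + stdVec r (q.1 + q.2 - (r + 1))

def dex (q : ℕ × ℕ) : E := (fun a b => if a = q.1 ∧ b = q.2 then 1 else 0, 0)
def dey (q : ℕ × ℕ) : E := (0, fun a b => if a = q.1 ∧ b = q.2 then 1 else 0)

def fam : (FXfree r S) ⊕ (FYfree r S) → E :=
  Sum.elim (fun c => dex c.1) (fun c => dey c.1)

def evx (t j : ℕ) : E →ₗ[ℝ] ℝ where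
  toFun p := p.1 t j
  map_add' _ _ := rfl
  map_smul' _ _ := rfl

def evy (t j : ℕ) : E →ₗ[ℝ] ℝ where
  toFun p := p.2 t j
  map_add' _ _ := rfl
  map_smul' _ _ := rfl

section main
variable (hr : 1 ≤ r) (hdec : ∀ i, 1 ≤ i → i < r → lam (i + 1) ≤ lam i) (hnonneg : 0 ≤ lam r)
    (hS : S = {i | 1 ≤ i ∧ i < r ∧ lam i = lam (i + 1)} ∪ {i | i = r ∧ lam r = 0})

-- basic facts (proved already in scratch)
include hdec in
lemma lam_anti : ∀ a b, 1 ≤ a → a ≤ b → b ≤ r → lam b ≤ lam a := by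
  intro a b ha hab hbr
  induction b with
  | zero => omega
  | succ n ih =>
    rcases Nat.eq_or_lt_of_le hab with h | h
    · rw [h]
    · exact le_trans (hdec n (by omega) (by omega)) (ih (by omega) (by omega))

include hdec hnonneg in
lemma Lam_nonneg : ∀ k, 1 ≤ k → 0 ≤ Lam r lam k := by
  intro k hk
  unfold Lam; split
  · exact le_trans hnonneg (lam_anti r lam hdec k r hk ‹_› le_rfl)
  · exact le_refl 0

include hdec hnonneg in
lemma Lam_anti (k : ℕ) (hk : 1 ≤ k) : Lam r lam (k + 1) ≤ Lam r lam k := by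
  unfold Lam
  rcases lt_trichotomy k r with h | h | h
  · simp only [if_pos (by omega : k ≤ r), if_pos (by omega : k + 1 ≤ r)]
    exact hdec k hk h
  · subst h
    simp only [if_pos le_rfl, if_neg (by omega : ¬ k + 1 ≤ k)]
    exact hnonneg
  · simp [if_neg (by omega : ¬ k ≤ r), if_neg (by omega : ¬ k + 1 ≤ r), if_neg (by omega : ¬ k < r)]

include hdec hnonneg in
lemma Lam_anti' (a b : ℕ) (ha : 1 ≤ a) (hab : a ≤ b) : Lam r lam b ≤ Lam r lam a := by
  induction b with
  | zero => omega
  | succ n ih =>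
    rcases Nat.eq_or_lt_of_le hab with h | h
    · rw [h]
    · exact le_trans (Lam_anti r lam hdec hnonneg n (by omega)) (ih (by omega))

include hS in
lemma S_mem_flat (k : ℕ) (hk : k ∈ S) (hkr : k < r) : lam k = lam (k + 1) := by
  subst hS
  rcases hk with h | h
  · exact h.2.2
  · exact absurd h.1 (by omega)

include hS in
lemma S_mem_last (hk : r ∈ S) : lam r = 0 := by
  subst hS
  rcases hk with h | h
  · exact absurd h.2.1 (by omega)
  · exact h.2

include hr hS in
lemma S_sub (k : ℕ) (hk : k ∈ S) : 1 ≤ k ∧ k ≤ r := by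
  subst hS
  rcases hk with h | h
  · exact ⟨h.1, le_of_lt h.2.1⟩
  · rcases h with ⟨h1, h2⟩
    subst h1
    exact ⟨hr, le_rfl⟩

lemma gam_le_gap (k : ℕ) (hk1 : 1 ≤ k) (hkr : k ≤ r) (hkS : k ∉ S) :
    gam r lam S ≤ Lam r lam k - Lam r lam (k + 1) := by
  have hmem : k ∈ gapsF r S := by
    simp [gapsF, hk1, hkr, hkS]
  unfold gam
  rw [dif_pos ⟨k, hmem⟩]
  exact Finset.min'_le _ _ (Finset.mem_image_of_mem _ hmem)

include hdec hnonneg hS in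
lemma gam_pos : 0 < gam r lam S := by
  unfold gam
  split
  · rename_i h
    apply (Finset.lt_min'_iff _ _).2
    intro y hy
    simp only [Finset.mem_image] at hy
    obtain ⟨k, hk, rfl⟩ := hy
    simp only [gapsF, Finset.mem_filter, Finset.mem_Icc] at hk
    obtain ⟨⟨hk1, hkr⟩, hkS⟩ := hk
    have hle := Lam_anti r lam hdec hnonneg k hk1
    rcases eq_or_lt_of_le hle with he | hlt
    · exfalso; apply hkS
      subst hS
      unfold Lam at he
      rcases lt_or_eq_of_le hkr with h' | h'
      · left
        refine ⟨hk1, h', ?_⟩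
        rw [if_pos (by omega : k + 1 ≤ r), if_pos (by omega : k ≤ r)] at he
        exact he.symm
      · right
        refine ⟨h', ?_⟩
        subst h'
        rw [if_neg (by omega : ¬ k + 1 ≤ k), if_pos le_rfl] at he
        exact he.symm
    · linarith
  · exact one_pos

include hdec hnonneg hS in
lemma sA_pos : 0 < sA r lam S := by
  have := gam_pos r lam S hdec hnonneg hS
  unfold sA
  positivity

lemma Bsm_rec (n i : ℕ) :
    Bsm r lam (n + 1) i = (Bsm r lam n i + Bsm r lam n (i + 1)) / 2 := by
  unfold Bsm
  rw [← add_div, div_div]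
  have hpow : (2:ℝ) ^ n * 2 = 2 ^ (n+1) := by rw [pow_succ]
  rw [hpow]
  congr 1
  rw [Finset.sum_range_succ' _ (n + 1)]
  have h1 : ∀ s ∈ range (n + 1), ((n+1).choose (s+1) : ℝ) * Lam r lam (i + (s+1))
      = (n.choose s : ℝ) * Lam r lam ((i+1) + s) + (n.choose (s+1) : ℝ) * Lam r lam (i + (s+1)) := by
    intro s _
    have : i + (s + 1) = (i + 1) + s := by omega
    rw [Nat.choose_succ_succ', this]
    push_cast
    ring
  rw [Finset.sum_congr rfl h1, Finset.sum_add_distrib]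
  have h2 : ∑ s ∈ range (n+1), (n.choose (s+1) : ℝ) * Lam r lam (i + (s+1))
      = ∑ s ∈ range n, (n.choose (s+1) : ℝ) * Lam r lam (i + (s+1)) := by
    rw [Finset.sum_range_succ]
    simp
  have h3 := Finset.sum_range_succ' (fun s => (n.choose s : ℝ) * Lam r lam (i + s)) n
  simp only [Nat.choose_zero_right, Nat.cast_one, one_mul, Nat.add_zero, add_zero] at h3 ⊢
  rw [h2, h3]
  ring

lemma Bsm_diff (n i : ℕ) : Bsm r lam n i - Bsm r lam n (i + 1)
    = (∑ s ∈ range (n + 1), (n.choose s : ℝ) * (Lam r lam (i + s) - Lam r lam (i + s + 1))) / 2 ^ n := by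
  unfold Bsm
  rw [div_sub_div_same]
  congr 1
  rw [← Finset.sum_sub_distrib]
  refine Finset.sum_congr rfl fun s _ => ?_
  have : i + 1 + s = i + s + 1 := by omega
  rw [this]; ring

include hdec hnonneg in
lemma Bsm_anti (n i : ℕ) (hi : 1 ≤ i) : Bsm r lam n (i + 1) ≤ Bsm r lam n i := by
  have h := Bsm_diff r lam n i
  have hnn : 0 ≤ (∑ s ∈ range (n + 1), (n.choose s : ℝ) * (Lam r lam (i + s) - Lam r lam (i + s + 1))) / 2 ^ n := by
    apply div_nonneg _ (by positivity)
    apply Finset.sum_nonneg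
    intro s _
    have h1 := Lam_anti r lam hdec hnonneg (i + s) (by omega)
    have h2 : (0:ℝ) ≤ Lam r lam (i + s) - Lam r lam (i + s + 1) := by linarith
    positivity
  linarith

include hdec hnonneg in
lemma Bsm_nonneg (n i : ℕ) (hi : 1 ≤ i) : 0 ≤ Bsm r lam n i := by
  unfold Bsm
  apply div_nonneg _ (by positivity)
  apply Finset.sum_nonneg
  intro s _
  have := Lam_nonneg r lam hdec hnonneg (i + s) (by omega)
  positivity

include hdec hnonneg in
lemma Bsm_ge_single (n i : ℕ) (hi : 1 ≤ i) : Lam r lam i / 2 ^ n ≤ Bsm r lam n i := by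
  unfold Bsm
  gcongr
  have hterm := Finset.single_le_sum (f := fun s => (n.choose s : ℝ) * Lam r lam (i + s))
    (fun s _ => by
      have := Lam_nonneg r lam hdec hnonneg (i + s) (by omega)
      positivity)
    (Finset.mem_range.2 (Nat.succ_pos n))
  simpa using hterm

include hdec hnonneg in
lemma Bsm_diff_ge (n i : ℕ) (hi : 1 ≤ i) (m : ℕ) (hm1 : i ≤ m) (hm2 : m ≤ i + n)
    (hmr : m ≤ r) (hmS : m ∉ S) :
    gam r lam S / 2 ^ n ≤ Bsm r lam n i - Bsm r lam n (i + 1) := by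
  rw [Bsm_diff]
  have hnn : ∀ s ∈ range (n+1), (0:ℝ) ≤ (n.choose s : ℝ) * (Lam r lam (i + s) - Lam r lam (i + s + 1)) := by
    intro s _
    have h1 := Lam_anti r lam hdec hnonneg (i + s) (by omega)
    have h2 : (0:ℝ) ≤ Lam r lam (i + s) - Lam r lam (i + s + 1) := by linarith
    positivity
  have hkey : gam r lam S ≤ ∑ s ∈ range (n + 1), (n.choose s : ℝ) * (Lam r lam (i + s) - Lam r lam (i + s + 1)) := by
    have hmem : m - i ∈ range (n + 1) := by simp; omega
    have hterm := Finset.single_le_sum hnn hmem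
    have him : i + (m - i) = m := by omega
    rw [him] at hterm
    have hc : (1:ℝ) ≤ (n.choose (m - i) : ℝ) := by
      have := Nat.choose_pos (show m - i ≤ n by omega)
      exact_mod_cast this
    have hg := gam_le_gap r lam S m (by omega) hmr hmS
    have hgepos : 0 ≤ Lam r lam m - Lam r lam (m + 1) := by
      have := Lam_anti r lam hdec hnonneg m (by omega); linarith
    nlinarith
  gcongr

-- membership of base and perturbed points
lemma x0_eq (ii j : ℕ) (h1 : ii + 1 ≤ j) (h2 : j ≤ r) :
    x0 r lam (ii + 1) j = Bsm r lam (2 * ii) (j - ii) := by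
  have hv : 1 ≤ ii + 1 ∧ ii + 1 ≤ j ∧ j ≤ r := ⟨by omega, h1, h2⟩
  simp only [x0, if_pos hv]
  congr 1 <;> omega

lemma y0_eq (ii j : ℕ) (h1 : ii + 1 ≤ j) (h2 : j ≤ r) :
    y0 r lam (ii + 1) j = Bsm r lam (2 * ii + 1) (j - ii) := by
  have hv : 1 ≤ ii + 1 ∧ ii + 1 ≤ j ∧ j ≤ r := ⟨by omega, h1, h2⟩
  simp only [y0, if_pos hv]
  congr 1 <;> omega

include hdec hnonneg in
lemma p0_constraints : IsBZBC r (x0 r lam) (y0 r lam) := by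
  refine ⟨?_, ?_, ?_, ?_⟩
  · -- y i j ≤ x i j
    rintro ⟨⟩ j h1 h2 h3
    · omega
    rename_i ii
    rw [x0_eq r lam ii j h2 h3, y0_eq r lam ii j h2 h3, Bsm_rec]
    have := Bsm_anti r lam hdec hnonneg (2 * ii) (j - ii) (by omega)
    linarith
  · -- y i j ≤ x (i+1) j
    rintro ⟨⟩ j h1 h2 h3
    · omega
    rename_i ii
    rw [y0_eq r lam ii j (by omega) h3, x0_eq r lam (ii + 1) j (by omega) h3]
    have e1 : 2 * (ii + 1) = (2 * ii + 1) + 1 := by omega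
    rw [e1]
    have hrec := Bsm_rec r lam (2 * ii + 1) (j - (ii + 1))
    have e2 : j - (ii + 1) + 1 = j - ii := by omega
    rw [e2] at hrec
    have hanti := Bsm_anti r lam hdec hnonneg (2 * ii + 1) (j - (ii + 1)) (by omega)
    rw [e2] at hanti
    linarith
  · -- x i (j+1) ≤ y i j ∧ x (i+1) (j+1) ≤ y i j
    rintro ⟨⟩ j h1 h2 h3
    · omega
    rename_i ii
    constructor
    · rw [x0_eq r lam ii (j + 1) (by omega) h3, y0_eq r lam ii j h2 (by omega), Bsm_rec]
      have e : j + 1 - ii = (j - ii) + 1 := by omega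
      rw [e]
      have := Bsm_anti r lam hdec hnonneg (2 * ii) (j - ii) (by omega)
      linarith
    · rw [x0_eq r lam (ii + 1) (j + 1) (by omega) h3, y0_eq r lam ii j h2 (by omega)]
      have e1 : 2 * (ii + 1) = (2 * ii + 1) + 1 := by omega
      rw [e1]
      have e2 : j + 1 - (ii + 1) = j - ii := by omega
      rw [e2]
      have hrec := Bsm_rec r lam (2 * ii + 1) (j - ii)
      have hanti := Bsm_anti r lam hdec hnonneg (2 * ii + 1) (j - ii) (by omega)
      linarith
  · -- 0 ≤ y i r
    rintro ⟨⟩ h1 h2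
    · omega
    rename_i ii
    rw [y0_eq r lam ii r h2 le_rfl]
    exact Bsm_nonneg r lam hdec hnonneg _ _ (by omega)

include hdec hnonneg in
lemma p0_mem : p0 r lam ∈ BZsetBC r lam := by
  refine ⟨?_, p0_constraints r lam hdec hnonneg, ?_, ?_⟩
  · intro j h1 h2
    show x0 r lam 1 j = lam j
    rw [x0_eq r lam 0 j (by omega) h2]
    simp only [Bsm, Lam, mul_zero, pow_zero, div_one]
    rw [Finset.sum_range_one]
    simp [Nat.sub_zero, if_pos h2]
  · intro i j h
    show x0 r lam i j = 0
    simp only [x0, if_neg h]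
  · intro i j h
    show y0 r lam i j = 0
    simp only [y0, if_neg h]

include hdec hnonneg hS in
lemma sA_le_half (n : ℕ) (hn : n ≤ 2 * r) : sA r lam S ≤ gam r lam S / 2 ^ n / 2 := by
  have hg := gam_pos r lam S hdec hnonneg hS
  unfold sA
  rw [div_div, ← pow_succ]
  apply div_le_div_of_nonneg_left hg.le (by positivity)
  apply pow_le_pow_right₀ (by norm_num)
  omega

lemma x0_top (j : ℕ) (h1 : 1 ≤ j) (h2 : j ≤ r) : x0 r lam 1 j = lam j := by
  rw [x0_eq r lam 0 j (by omega) h2]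
  simp only [Bsm, Lam, mul_zero, pow_zero, div_one]
  rw [Finset.sum_range_one]
  simp [Nat.sub_zero, if_pos h2]

include hdec hnonneg hS in
lemma p1x_mem (t j : ℕ) (h : (t, j) ∈ FXfree r S) : p1x r lam S t j ∈ BZsetBC r lam := by
  have hs := sA_pos r lam S hdec hnonneg hS
  have base := p0_constraints r lam hdec hnonneg
  simp only [FXfree, Finset.mem_filter, Finset.mem_product, Finset.mem_Icc] at h
  obtain ⟨⟨⟨ht1, htr⟩, hj1, hjr⟩, ht2, htj, hnF⟩ := h
  unfold FxC at hnF
  push_neg at hnF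
  obtain ⟨m, hm1, hm2, hm3, hmS⟩ := hnF
  refine ⟨?_, ⟨?_, ?_, ?_, ?_⟩, ?_, ?_⟩
  · -- top row
    intro b hb1 hb2
    show x0 r lam 1 b + _ = lam b
    rw [if_neg (by omega : ¬ (1 = t ∧ b = j)), add_zero]
    exact x0_top r lam b hb1 hb2
  · -- family 1
    intro i b h1 h2 h3
    show y0 r lam i b ≤ x0 r lam i b + _
    have hb : (0:ℝ) ≤ (if i = t ∧ b = j then sA r lam S else 0) := by
      split
      · exact hs.le
      · exact le_rfl
    linarith [base.1 i b h1 h2 h3]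
  · -- family 2
    intro i b h1 h2 h3
    show y0 r lam i b ≤ x0 r lam (i + 1) b + _
    have hb : (0:ℝ) ≤ (if i + 1 = t ∧ b = j then sA r lam S else 0) := by
      split
      · exact hs.le
      · exact le_rfl
    linarith [base.2.1 i b h1 h2 h3]
  · -- family 3: the two tight ones
    intro i b h1 h2 h3
    constructor
    · show x0 r lam i (b + 1) + _ ≤ y0 r lam i b
      by_cases hc : i = t ∧ b + 1 = j
      · obtain ⟨rfl, hbj⟩ := hc
        rw [if_pos ⟨rfl, hbj⟩]
        subst hbj
        obtain ⟨ss, rfl⟩ : ∃ ss, i = ss + 2 := ⟨i - 2, by omega⟩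
        rw [x0_eq r lam (ss + 1) (b + 1) (by omega) (by omega),
            y0_eq r lam (ss + 1) b (by omega) (by omega)]
        have e1 : b + 1 - (ss + 1) = b - ss := by omega
        have e2 : b - (ss + 1) + 1 = b - ss := by omega
        rw [e1]
        have hrec := Bsm_rec r lam (2 * (ss + 1)) (b - (ss + 1))
        rw [e2] at hrec
        have hD := Bsm_diff_ge r lam S hdec hnonneg (2 * (ss + 1)) (b - (ss + 1))
          (by omega) m (by omega) (by omega) hm3 hmS
        rw [e2] at hD
        have hle := sA_le_half r lam S hdec hnonneg hS (2 * (ss + 1)) (by omega)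

        linarith
      · rw [if_neg hc, add_zero]
        exact (base.2.2.1 i b h1 h2 h3).1
    · show x0 r lam (i + 1) (b + 1) + _ ≤ y0 r lam i b
      by_cases hc : i + 1 = t ∧ b + 1 = j
      · obtain ⟨hit, hbj⟩ := hc
        rw [if_pos ⟨hit, hbj⟩]
        subst hit hbj
        obtain ⟨ss, rfl⟩ : ∃ ss, i = ss + 1 := ⟨i - 1, by omega⟩
        rw [x0_eq r lam (ss + 1) (b + 1) (by omega) (by omega),
            y0_eq r lam ss b (by omega) (by omega)]
        have e1 : b + 1 - (ss + 1) = b - ss := by omega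
        rw [e1]
        have e3 : 2 * (ss + 1) = (2 * ss + 1) + 1 := by omega
        rw [e3]
        have hrec := Bsm_rec r lam (2 * ss + 1) (b - ss)
        have hD := Bsm_diff_ge r lam S hdec hnonneg (2 * ss + 1) (b - ss)
          (by omega) m (by omega) (by omega) hm3 hmS
        have hle := sA_le_half r lam S hdec hnonneg hS (2 * ss + 1) (by omega)
        linarith
      · rw [if_neg hc, add_zero]
        exact (base.2.2.1 i b h1 h2 h3).2
  · -- family 4
    intro i h1 h2
    exact base.2.2.2 i h1 h2
  · -- support x
    intro i b hv
    show x0 r lam i b + _ = 0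
    rw [if_neg (by intro hc; exact hv (by omega)), add_zero]
    simp only [x0, if_neg hv]
  · -- support y
    intro i b hv
    show y0 r lam i b = 0
    simp only [y0, if_neg hv]

include hdec hnonneg hS in
lemma p1y_mem (t j : ℕ) (h : (t, j) ∈ FYfree r S) : p1y r lam S t j ∈ BZsetBC r lam := by
  have hs := sA_pos r lam S hdec hnonneg hS
  have base := p0_constraints r lam hdec hnonneg
  simp only [FYfree, Finset.mem_filter, Finset.mem_product, Finset.mem_Icc] at h
  obtain ⟨⟨⟨ht1, htr⟩, hj1, hjr⟩, htj, hnF⟩ := h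
  unfold FyC at hnF
  push_neg at hnF
  obtain ⟨m, hm1, hm2, hm3, hmS⟩ := hnF
  refine ⟨?_, ⟨?_, ?_, ?_, ?_⟩, ?_, ?_⟩
  · -- top row
    intro b hb1 hb2
    exact x0_top r lam b hb1 hb2
  · -- family 1
    intro i b h1 h2 h3
    show y0 r lam i b + _ ≤ x0 r lam i b
    by_cases hc : i = t ∧ b = j
    · obtain ⟨rfl, rfl⟩ := hc
      rw [if_pos ⟨rfl, rfl⟩]
      obtain ⟨ss, rfl⟩ : ∃ ss, i = ss + 1 := ⟨i - 1, by omega⟩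
      rw [x0_eq r lam ss b h2 h3, y0_eq r lam ss b h2 h3]
      have hrec := Bsm_rec r lam (2 * ss) (b - ss)
      have hD := Bsm_diff_ge r lam S hdec hnonneg (2 * ss) (b - ss)
        (by omega) m (by omega) (by omega) hm3 hmS
      have hle := sA_le_half r lam S hdec hnonneg hS (2 * ss) (by omega)
      linarith
    · rw [if_neg hc, add_zero]
      exact base.1 i b h1 h2 h3
  · -- family 2
    intro i b h1 h2 h3
    show y0 r lam i b + _ ≤ x0 r lam (i + 1) b
    by_cases hc : i = t ∧ b = j
    · obtain ⟨rfl, rfl⟩ := hc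
      rw [if_pos ⟨rfl, rfl⟩]
      obtain ⟨ss, rfl⟩ : ∃ ss, i = ss + 1 := ⟨i - 1, by omega⟩
      rw [x0_eq r lam (ss + 1) b (by omega) h3, y0_eq r lam ss b (by omega) h3]
      have e3 : 2 * (ss + 1) = (2 * ss + 1) + 1 := by omega
      rw [e3]
      have hrec := Bsm_rec r lam (2 * ss + 1) (b - (ss + 1))
      have e2 : b - (ss + 1) + 1 = b - ss := by omega
      rw [e2] at hrec
      have hD := Bsm_diff_ge r lam S hdec hnonneg (2 * ss + 1) (b - (ss + 1))
        (by omega) m (by omega) (by omega) hm3 hmS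
      rw [e2] at hD
      have hle := sA_le_half r lam S hdec hnonneg hS (2 * ss + 1) (by omega)
      linarith
    · rw [if_neg hc, add_zero]
      exact base.2.1 i b h1 h2 h3
  · -- family 3
    intro i b h1 h2 h3
    have hb : (0:ℝ) ≤ (if i = t ∧ b = j then sA r lam S else 0) := by
      split
      · exact hs.le
      · exact le_rfl
    have := base.2.2.1 i b h1 h2 h3
    constructor
    · show x0 r lam i (b + 1) ≤ y0 r lam i b + _
      linarith [this.1]
    · show x0 r lam (i + 1) (b + 1) ≤ y0 r lam i b + _
      linarith [this.2]
  · -- family 4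
    intro i h1 h2
    show (0:ℝ) ≤ y0 r lam i r + _
    have hb : (0:ℝ) ≤ (if i = t ∧ r = j then sA r lam S else 0) := by
      split
      · exact hs.le
      · exact le_rfl
    linarith [base.2.2.2 i h1 h2]
  · -- support x
    intro i b hv
    show x0 r lam i b = 0
    simp only [x0, if_neg hv]
  · -- support y
    intro i b hv
    show y0 r lam i b + _ = 0
    rw [if_neg (by intro hc; exact hv (by omega)), add_zero]
    simp only [y0, if_neg hv]

-- forced values
include hS in
lemma forced_val (p : E) (hp : p ∈ BZsetBC r lam) :
    ∀ t, 1 ≤ t → ∀ j, t ≤ j → j ≤ r →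
      (FxC r S t j → p.1 t j = lam j) ∧ (FyC r S t j → p.2 t j = lam j) := by
  obtain ⟨htop, ⟨c1, c2, c3, c4⟩, hsx, hsy⟩ := hp
  intro t ht
  induction t, ht using Nat.le_induction with
  | base =>
    intro j hj1 hjr
    refine ⟨fun _ => htop j hj1 hjr, ?_⟩
    intro hF
    have hjS : j ∈ S := hF j (by omega) (by omega) hjr
    have hub := c1 1 j (by omega) hj1 hjr
    rw [htop j hj1 hjr] at hub
    rcases eq_or_lt_of_le hjr with heq | hlt
    · subst heq
      have h0 := S_mem_last _ lam S hS hjS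
      have hlb := c4 1 (by omega) (by omega)
      linarith
    · have hflat := S_mem_flat r lam S hS j hjS hlt
      have hlb := (c3 1 j (by omega) hj1 (by omega)).1
      rw [htop (j + 1) (by omega) (by omega)] at hlb
      linarith
  | succ t ht IH =>
    have hxall : ∀ j, t + 1 ≤ j → j ≤ r → FxC r S (t + 1) j → p.1 (t + 1) j = lam j := by
      intro j hj1 hjr hF
      obtain ⟨b, rfl⟩ : ∃ b, j = b + 1 := ⟨j - 1, by omega⟩
      have hub := (c3 t b (by omega) (by omega) (by omega)).2
      have hyb : p.2 t b = lam b :=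
        (IH b (by omega) (by omega)).2 (fun k hk1 hk2 hk3 => hF k (by omega) (by omega) hk3)
      have hbS : b ∈ S := hF b (by omega) (by omega) (by omega)
      have hflat : lam b = lam (b + 1) := S_mem_flat r lam S hS b hbS (by omega)
      have hlb := c2 t (b + 1) (by omega) (by omega) hjr
      have hyb1 : p.2 t (b + 1) = lam (b + 1) :=
        (IH (b + 1) (by omega) hjr).2 (fun k hk1 hk2 hk3 => hF k (by omega) (by omega) hk3)
      rw [hyb] at hub
      rw [hyb1] at hlb
      linarith
    intro j hj1 hjr
    refine ⟨hxall j hj1 hjr, ?_⟩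
    intro hF
    have hFx : FxC r S (t + 1) j := fun k hk1 hk2 hk3 => hF k hk1 (by omega) hk3
    have hub := c1 (t + 1) j (by omega) hj1 hjr
    rw [hxall j hj1 hjr hFx] at hub
    rcases eq_or_lt_of_le hjr with heq | hlt
    · subst heq
      have hjS : j ∈ S := hF j (by omega) (by omega) le_rfl
      have h0 := S_mem_last _ lam S hS hjS
      have hlb := c4 (t + 1) (by omega) hj1
      linarith
    · have hjS : j ∈ S := hF j (by omega) (by omega) (by omega)
      have hflat := S_mem_flat r lam S hS j hjS hlt
      have hlb := (c3 (t + 1) j (by omega) hj1 (by omega)).1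
      have hx1 : p.1 (t + 1) (j + 1) = lam (j + 1) :=
        hxall (j + 1) (by omega) (by omega) (fun k hk1 hk2 hk3 => hF k (by omega) (by omega) hk3)
      rw [hx1] at hlb
      linarith

-- span characterization
lemma sum_ind (F : Finset (ℕ × ℕ)) (f : ℕ × ℕ → ℝ) (a b : ℕ) :
    (∑ c ∈ F, f c * (if a = c.1 ∧ b = c.2 then (1:ℝ) else 0))
      = if (a, b) ∈ F then f (a, b) else 0 := by
  rw [← Finset.sum_ite_eq' F (a, b) f]
  refine Finset.sum_congr rfl fun c hc => ?_
  by_cases h : c = (a, b)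
  · subst h
    simp
  · rw [if_neg h, if_neg, mul_zero]
    rintro ⟨h1, h2⟩
    exact h (Prod.ext h1.symm h2.symm)

include hdec hnonneg hS in
lemma span_le_span :
    vectorSpan ℝ (BZsetBC r lam) ≤ Submodule.span ℝ (Set.range (fam r S)) := by
  rw [vectorSpan_def]
  apply Submodule.span_le.2
  rintro v ⟨p, hp, q, hq, rfl⟩
  show p - q ∈ _
  have fvp := forced_val r lam S hS p hp
  have fvq := forced_val r lam S hS q hq
  obtain ⟨ptop, _, psx, psy⟩ := hp
  obtain ⟨qtop, _, qsx, qsy⟩ := hq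
  have key : p - q = (∑ c ∈ FXfree r S, (p.1 c.1 c.2 - q.1 c.1 c.2) • dex c)
      + (∑ c ∈ FYfree r S, (p.2 c.1 c.2 - q.2 c.1 c.2) • dey c) := by
    have h1 : ∀ a b, p.1 a b - q.1 a b
        = ∑ c ∈ FXfree r S, (p.1 c.1 c.2 - q.1 c.1 c.2) * (if a = c.1 ∧ b = c.2 then (1:ℝ) else 0) := by
      intro a b
      rw [sum_ind]
      by_cases hm : (a, b) ∈ FXfree r S
      · rw [if_pos hm]
      · rw [if_neg hm]
        by_cases hv : 1 ≤ a ∧ a ≤ b ∧ b ≤ r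
        · rcases Nat.lt_or_ge a 2 with ha | ha
          · have ha1 : a = 1 := by omega
            subst ha1
            rw [ptop b hv.2.1 hv.2.2, qtop b hv.2.1 hv.2.2, sub_self]
          · have hFx : FxC r S a b := by
              by_contra hc
              exact hm (by
                simp only [FXfree, Finset.mem_filter, Finset.mem_product, Finset.mem_Icc]
                exact ⟨⟨⟨by omega, by omega⟩, by omega, hv.2.2⟩, ha, hv.2.1, hc⟩)
            rw [(fvp a (by omega) b hv.2.1 hv.2.2).1 hFx,
                (fvq a (by omega) b hv.2.1 hv.2.2).1 hFx, sub_self]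
        · rw [psx a b hv, qsx a b hv, sub_self]
    have h2 : ∀ a b, p.2 a b - q.2 a b
        = ∑ c ∈ FYfree r S, (p.2 c.1 c.2 - q.2 c.1 c.2) * (if a = c.1 ∧ b = c.2 then (1:ℝ) else 0) := by
      intro a b
      rw [sum_ind]
      by_cases hm : (a, b) ∈ FYfree r S
      · rw [if_pos hm]
      · rw [if_neg hm]
        by_cases hv : 1 ≤ a ∧ a ≤ b ∧ b ≤ r
        · have hFy : FyC r S a b := by
            by_contra hc
            exact hm (by
              simp only [FYfree, Finset.mem_filter, Finset.mem_product, Finset.mem_Icc]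
              exact ⟨⟨⟨hv.1, by omega⟩, by omega, hv.2.2⟩, hv.2.1, hc⟩)
          rw [(fvp a hv.1 b hv.2.1 hv.2.2).2 hFy,
              (fvq a hv.1 b hv.2.1 hv.2.2).2 hFy, sub_self]
        · rw [psy a b hv, qsy a b hv, sub_self]
    refine Prod.ext ?_ ?_
    · simp only [Prod.fst_sub, Prod.fst_add, Prod.fst_sum, Prod.smul_fst, dex, dey,
        smul_zero, Finset.sum_const_zero, add_zero]
      funext a b
      rw [Finset.sum_apply, Finset.sum_apply]
      simp only [Pi.sub_apply, Pi.smul_apply, smul_eq_mul]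
      exact h1 a b
    · simp only [Prod.snd_sub, Prod.snd_add, Prod.snd_sum, Prod.smul_snd, dex, dey,
        smul_zero, Finset.sum_const_zero, zero_add]
      funext a b
      rw [Finset.sum_apply, Finset.sum_apply]
      simp only [Pi.sub_apply, Pi.smul_apply, smul_eq_mul]
      exact h2 a b
  rw [key]
  apply Submodule.add_mem
  · apply Submodule.sum_mem
    intro c hc
    apply Submodule.smul_mem
    apply Submodule.subset_span
    exact ⟨Sum.inl ⟨c, hc⟩, rfl⟩
  · apply Submodule.sum_mem
    intro c hc
    apply Submodule.smul_mem
    apply Submodule.subset_span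
    exact ⟨Sum.inr ⟨c, hc⟩, rfl⟩

include hdec hnonneg hS in
lemma span_ge_span :
    Submodule.span ℝ (Set.range (fam r S)) ≤ vectorSpan ℝ (BZsetBC r lam) := by
  have hsA := sA_pos r lam S hdec hnonneg hS
  apply Submodule.span_le.2
  rintro v ⟨c, rfl⟩
  have h0 := p0_mem r lam hdec hnonneg
  cases c with
  | inl c =>
    have h1 : p1x r lam S c.1.1 c.1.2 ∈ BZsetBC r lam := by
      apply p1x_mem r lam S hdec hnonneg hS
      rw [Prod.mk.eta]
      exact c.2
    have hsub : p1x r lam S c.1.1 c.1.2 - p0 r lam = sA r lam S • dex c.1 := by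
      refine Prod.ext ?_ ?_
      · funext a b
        simp only [p1x, p0, dex, Prod.fst_sub, Pi.sub_apply, Prod.smul_fst, Pi.smul_apply,
          smul_eq_mul]
        split
        · ring
        · ring
      · simp only [p1x, p0, dex, Prod.snd_sub, Prod.smul_snd, smul_zero]
        exact sub_self _
    have hv : p1x r lam S c.1.1 c.1.2 -ᵥ p0 r lam ∈ vectorSpan ℝ (BZsetBC r lam) :=
      vsub_mem_vectorSpan ℝ h1 h0
    have hvsub : p1x r lam S c.1.1 c.1.2 -ᵥ p0 r lam = p1x r lam S c.1.1 c.1.2 - p0 r lam := rfl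
    rw [hvsub, hsub] at hv
    have : fam r S (Sum.inl c) = (sA r lam S)⁻¹ • (sA r lam S • dex c.1) := by
      rw [inv_smul_smul₀ (ne_of_gt hsA)]
      rfl
    rw [this]
    exact Submodule.smul_mem _ _ hv
  | inr c =>
    have h1 : p1y r lam S c.1.1 c.1.2 ∈ BZsetBC r lam := by
      apply p1y_mem r lam S hdec hnonneg hS
      rw [Prod.mk.eta]
      exact c.2
    have hsub : p1y r lam S c.1.1 c.1.2 - p0 r lam = sA r lam S • dey c.1 := by
      refine Prod.ext ?_ ?_
      · simp only [p1y, p0, dey, Prod.fst_sub, Prod.smul_fst, smul_zero]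
        exact sub_self _
      · funext a b
        simp only [p1y, p0, dey, Prod.snd_sub, Pi.sub_apply, Prod.smul_snd, Pi.smul_apply,
          smul_eq_mul]
        split
        · ring
        · ring
    have hv : p1y r lam S c.1.1 c.1.2 -ᵥ p0 r lam ∈ vectorSpan ℝ (BZsetBC r lam) :=
      vsub_mem_vectorSpan ℝ h1 h0
    have hvsub : p1y r lam S c.1.1 c.1.2 -ᵥ p0 r lam = p1y r lam S c.1.1 c.1.2 - p0 r lam := rfl
    rw [hvsub, hsub] at hv
    have : fam r S (Sum.inr c) = (sA r lam S)⁻¹ • (sA r lam S • dey c.1) := by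
      rw [inv_smul_smul₀ (ne_of_gt hsA)]
      rfl
    rw [this]
    exact Submodule.smul_mem _ _ hv

lemma fam_indep : LinearIndependent ℝ (fam r S) := by
  rw [linearIndependent_iff']
  intro s g hsum c hc
  let ev : (FXfree r S) ⊕ (FYfree r S) → (E →ₗ[ℝ] ℝ) :=
    Sum.elim (fun c => evx c.1.1 c.1.2) (fun c => evy c.1.1 c.1.2)
  have hev : ∀ c c', ev c (fam r S c') = if c' = c then 1 else 0 := by
    rintro (c | c) (c' | c') <;>
      simp only [ev, fam, Sum.elim_inl, Sum.elim_inr, evx, evy, dex, dey,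
        LinearMap.coe_mk, AddHom.coe_mk]
    · by_cases h : c' = c
      · subst h
        simp
      · have hA : ¬((↑c : ℕ × ℕ).1 = (↑c' : ℕ × ℕ).1 ∧ (↑c : ℕ × ℕ).2 = (↑c' : ℕ × ℕ).2) := by
          rintro ⟨h1, h2⟩
          exact h (Subtype.ext (Prod.ext h1.symm h2.symm))
        rw [if_neg hA, if_neg (by simp [h])]
    · simp
    · simp
    · by_cases h : c' = c
      · subst h
        simp
      · have hA : ¬((↑c : ℕ × ℕ).1 = (↑c' : ℕ × ℕ).1 ∧ (↑c : ℕ × ℕ).2 = (↑c' : ℕ × ℕ).2) := by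
          rintro ⟨h1, h2⟩
          exact h (Subtype.ext (Prod.ext h1.symm h2.symm))
        rw [if_neg hA, if_neg (by simp [h])]
  have h2 := congrArg (ev c) hsum
  rw [map_sum, map_zero] at h2
  have h3 : ∑ i ∈ s, g i * (if i = c then (1:ℝ) else 0) = 0 := by
    have hcong : ∀ i ∈ s, (ev c) (g i • fam r S i) = g i * (if i = c then (1:ℝ) else 0) :=
      fun i _ => by rw [map_smul, hev c i, smul_eq_mul]
    rw [← Finset.sum_congr rfl hcong]
    exact h2
  rw [Finset.sum_congr rfl (fun i _ => by rw [mul_ite, mul_one, mul_zero]),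
    Finset.sum_ite_eq' s c g] at h3
  rwa [if_pos hc] at h3

include hdec hnonneg hS in
lemma dim_eq : affDim (BZsetBC r lam) = (FXfree r S).card + (FYfree r S).card := by
  have hspan : vectorSpan ℝ (BZsetBC r lam) = Submodule.span ℝ (Set.range (fam r S)) :=
    le_antisymm (span_le_span r lam S hdec hnonneg hS) (span_ge_span r lam S hdec hnonneg hS)
  rw [affDim, hspan, finrank_span_eq_card (fam_indep r S)]
  simp [Fintype.card_sum, Fintype.card_coe]

-- counting
lemma card_coords : (FXfree r S).card + (FYfree r S).card
    + ((FXforced r S).card + (FYforced r S).card) = r ^ 2 := by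
  set sq : Finset (ℕ × ℕ) := (Icc 1 r) ×ˢ (Icc 1 r) with hsq
  have hsqcard : sq.card = r ^ 2 := by
    rw [hsq, Finset.card_product, Nat.card_Icc]
    simp [pow_two]
  set Xall : Finset (ℕ × ℕ) := sq.filter (fun q => 2 ≤ q.1 ∧ q.1 ≤ q.2) with hXall
  set Yall : Finset (ℕ × ℕ) := sq.filter (fun q => q.1 ≤ q.2) with hYall
  have hx : (FXforced r S).card + (FXfree r S).card = Xall.card := by
    have e1 : FXforced r S = Xall.filter (fun q => FxC r S q.1 q.2) := by
      rw [hXall, Finset.filter_filter]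
      apply Finset.filter_congr
      intro x _
      tauto
    have e2 : FXfree r S = Xall.filter (fun q => ¬ FxC r S q.1 q.2) := by
      rw [hXall, Finset.filter_filter]
      apply Finset.filter_congr
      intro x _
      tauto
    rw [e1, e2]
    exact Finset.card_filter_add_card_filter_not _
  have hy : (FYforced r S).card + (FYfree r S).card = Yall.card := by
    have e1 : FYforced r S = Yall.filter (fun q => FyC r S q.1 q.2) := by
      rw [hYall, Finset.filter_filter]
      apply Finset.filter_congr
      intro x _
      tauto
    have e2 : FYfree r S = Yall.filter (fun q => ¬ FyC r S q.1 q.2) := by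
      rw [hYall, Finset.filter_filter]
      apply Finset.filter_congr
      intro x _
      tauto
    rw [e1, e2]
    exact Finset.card_filter_add_card_filter_not _
  have hxy : Yall.card + Xall.card = r ^ 2 := by
    have hpart : Yall.card + (sq.filter (fun q => ¬ q.1 ≤ q.2)).card = sq.card := by
      rw [hYall]
      exact Finset.card_filter_add_card_filter_not _
    have hbij : Xall.card = (sq.filter (fun q => ¬ q.1 ≤ q.2)).card := by
      apply Finset.card_nbij' (i := fun q => (q.2, q.1 - 1)) (j := fun q => (q.2 + 1, q.1))
      · intro a ha
        simp only [hXall, hsq, Finset.mem_coe, Finset.mem_filter, Finset.mem_product, Finset.mem_Icc] at ha ⊢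
        omega
      · intro a ha
        simp only [hXall, hsq, Finset.mem_coe, Finset.mem_filter, Finset.mem_product, Finset.mem_Icc] at ha ⊢
        omega
      · intro a ha
        simp only [hXall, hsq, Finset.mem_coe, Finset.mem_filter, Finset.mem_product, Finset.mem_Icc] at ha
        refine Prod.ext ?_ ?_
        · show a.1 - 1 + 1 = a.1
          omega
        · rfl
      · intro a ha
        simp only [hsq, Finset.mem_coe, Finset.mem_filter, Finset.mem_product, Finset.mem_Icc] at ha
        refine Prod.ext ?_ ?_
        · rfl
        · show a.2 + 1 - 1 = a.2
          omega
    omega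
  omega

lemma card_forced : (FXforced r S).card + (FYforced r S).card = (P r S).card := by
  have hpart : ((P r S).filter (fun q => (q.2 - q.1) % 2 = 1)).card
      + ((P r S).filter (fun q => ¬ (q.2 - q.1) % 2 = 1)).card = (P r S).card :=
    Finset.card_filter_add_card_filter_not _
  have hy : (FYforced r S).card = ((P r S).filter (fun q => (q.2 - q.1) % 2 = 1)).card := by
    apply Finset.card_nbij' (i := fun q => (q.2 + 1 - q.1, q.2 + q.1))
      (j := fun q => ((q.2 + 1 - q.1) / 2, (q.2 + q.1 - 1) / 2))
    · intro a ha
      rw [Finset.mem_coe, Finset.mem_filter]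
      simp only [FYforced, Finset.mem_coe, Finset.mem_filter, Finset.mem_product, Finset.mem_Icc] at ha
      obtain ⟨⟨⟨h1, h2⟩, h3, h4⟩, h5, hF⟩ := ha
      constructor
      · simp only [P, Finset.mem_filter, Finset.mem_product, Finset.mem_Icc]
        refine ⟨⟨⟨by omega, by omega⟩, by omega, by omega⟩, by omega, by omega, ?_⟩
        intro k hk1 hk2 hk3
        exact hF k (by omega) (by omega) hk3
      · show (a.2 + a.1 - (a.2 + 1 - a.1)) % 2 = 1
        omega
    · intro a ha
      rw [Finset.mem_coe, Finset.mem_filter] at ha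
      obtain ⟨haP, hpar⟩ := ha
      simp only [P, Finset.mem_filter, Finset.mem_product, Finset.mem_Icc] at haP
      obtain ⟨⟨⟨h1, h2⟩, h3, h4⟩, h5, h6, hc⟩ := haP
      have hpar' : (a.2 - a.1) % 2 = 1 := hpar
      simp only [FYforced, Finset.mem_coe, Finset.mem_filter, Finset.mem_product, Finset.mem_Icc]
      refine ⟨⟨⟨by omega, by omega⟩, by omega, by omega⟩, by omega, ?_⟩
      intro k hk1 hk2 hk3
      exact hc k (by omega) (by omega) hk3
    · intro a ha
      simp only [FYforced, Finset.mem_coe, Finset.mem_filter, Finset.mem_product, Finset.mem_Icc] at ha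
      obtain ⟨⟨⟨h1, h2⟩, h3, h4⟩, h5, hF⟩ := ha
      refine Prod.ext ?_ ?_
      · show (a.2 + a.1 + 1 - (a.2 + 1 - a.1)) / 2 = a.1
        omega
      · show (a.2 + a.1 + (a.2 + 1 - a.1) - 1) / 2 = a.2
        omega
    · intro a ha
      rw [Finset.mem_coe, Finset.mem_filter] at ha
      obtain ⟨haP, hpar⟩ := ha
      simp only [P, Finset.mem_filter, Finset.mem_product, Finset.mem_Icc] at haP
      have hpar' : (a.2 - a.1) % 2 = 1 := hpar
      refine Prod.ext ?_ ?_
      · show (a.2 + a.1 - 1) / 2 + 1 - (a.2 + 1 - a.1) / 2 = a.1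
        omega
      · show (a.2 + a.1 - 1) / 2 + (a.2 + 1 - a.1) / 2 = a.2
        omega
  have hx : (FXforced r S).card = ((P r S).filter (fun q => ¬ (q.2 - q.1) % 2 = 1)).card := by
    apply Finset.card_nbij' (i := fun q => (q.2 + 1 - q.1, q.2 + q.1 - 1))
      (j := fun q => ((q.2 - q.1) / 2 + 1, (q.2 + q.1) / 2))
    · intro a ha
      rw [Finset.mem_coe, Finset.mem_filter]
      simp only [FXforced, Finset.mem_coe, Finset.mem_filter, Finset.mem_product, Finset.mem_Icc] at ha
      obtain ⟨⟨⟨h1, h2⟩, h3, h4⟩, h5, h6, hF⟩ := ha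
      constructor
      · simp only [P, Finset.mem_filter, Finset.mem_product, Finset.mem_Icc]
        refine ⟨⟨⟨by omega, by omega⟩, by omega, by omega⟩, by omega, by omega, ?_⟩
        intro k hk1 hk2 hk3
        exact hF k (by omega) (by omega) hk3
      · show ¬ (a.2 + a.1 - 1 - (a.2 + 1 - a.1)) % 2 = 1
        omega
    · intro a ha
      rw [Finset.mem_coe, Finset.mem_filter] at ha
      obtain ⟨haP, hpar⟩ := ha
      simp only [P, Finset.mem_filter, Finset.mem_product, Finset.mem_Icc] at haP
      obtain ⟨⟨⟨h1, h2⟩, h3, h4⟩, h5, h6, hc⟩ := haP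
      have hpar' : ¬ (a.2 - a.1) % 2 = 1 := hpar
      simp only [FXforced, Finset.mem_coe, Finset.mem_filter, Finset.mem_product, Finset.mem_Icc]
      refine ⟨⟨⟨by omega, by omega⟩, by omega, by omega⟩, by omega, by omega, ?_⟩
      intro k hk1 hk2 hk3
      exact hc k (by omega) (by omega) hk3
    · intro a ha
      simp only [FXforced, Finset.mem_coe, Finset.mem_filter, Finset.mem_product, Finset.mem_Icc] at ha
      obtain ⟨⟨⟨h1, h2⟩, h3, h4⟩, h5, h6, hF⟩ := ha
      refine Prod.ext ?_ ?_
      · show (a.2 + a.1 - 1 - (a.2 + 1 - a.1)) / 2 + 1 = a.1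
        omega
      · show (a.2 + a.1 - 1 + (a.2 + 1 - a.1)) / 2 = a.2
        omega
    · intro a ha
      rw [Finset.mem_coe, Finset.mem_filter] at ha
      obtain ⟨haP, hpar⟩ := ha
      simp only [P, Finset.mem_filter, Finset.mem_product, Finset.mem_Icc] at haP
      have hpar' : ¬ (a.2 - a.1) % 2 = 1 := hpar
      refine Prod.ext ?_ ?_
      · show (a.2 + a.1) / 2 + 1 - ((a.2 - a.1) / 2 + 1) = a.1
        omega
      · show (a.2 + a.1) / 2 + ((a.2 - a.1) / 2 + 1) - 1 = a.2
        omega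
  omega

lemma stdVec_at (i v : ℕ) (hv : v - 1 < r) (h1 : 1 ≤ v) :
    stdVec r i ⟨v - 1, hv⟩ = if v = i then 1 else 0 := by
  show (if (v - 1 : ℕ) + 1 = i then (1:ℝ) else 0) = _
  by_cases h : v = i
  · rw [if_pos (by omega), if_pos h]
  · rw [if_neg (by omega), if_neg h]

lemma sum_std (i : ℕ) (h1 : 1 ≤ i) (h2 : i ≤ r) :
    ∑ m : Fin r, stdVec r i m = 1 := by
  rw [Finset.sum_eq_single (⟨i - 1, by omega⟩ : Fin r)]
  · show (if ((⟨i - 1, by omega⟩ : Fin r) : ℕ) + 1 = i then (1:ℝ) else 0) = 1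
    rw [if_pos (by simp; omega)]
  · intro m _ hm
    show (if (m : ℕ) + 1 = i then (1:ℝ) else 0) = 0
    rw [if_neg]
    intro hc
    exact hm (Fin.ext (by simp; omega))
  · intro h
    exact absurd (Finset.mem_univ _) h

def fk (k : ℕ) : (Fin r → ℝ) → ℝ :=
  fun v => ∑ m ∈ Finset.univ.filter (fun m : Fin r => (m : ℕ) + 1 ≤ k), v m

lemma fk_add (k : ℕ) (u v : Fin r → ℝ) : fk r k (u + v) = fk r k u + fk r k v := by
  simp [fk, Finset.sum_add_distrib]

lemma fk_sub (k : ℕ) (u v : Fin r → ℝ) : fk r k (u - v) = fk r k u - fk r k v := by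
  simp [fk, Finset.sum_sub_distrib]

lemma fk_smul (k : ℕ) (c : ℝ) (v : Fin r → ℝ) : fk r k (c • v) = c * fk r k v := by
  simp [fk, Finset.mul_sum]

lemma fk_zero (k : ℕ) : fk r k (0 : Fin r → ℝ) = 0 := by
  simp [fk]

lemma fk_std (k i : ℕ) (h1 : 1 ≤ i) (h2 : i ≤ r) :
    fk r k (stdVec r i) = if i ≤ k then 1 else 0 := by
  unfold fk
  by_cases h : i ≤ k
  · rw [if_pos h, Finset.sum_eq_single (⟨i - 1, by omega⟩ : Fin r)]
    · show (if ((⟨i - 1, by omega⟩ : Fin r) : ℕ) + 1 = i then (1:ℝ) else 0) = 1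
      rw [if_pos (by simp; omega)]
    · intro m hm hne
      show (if (m : ℕ) + 1 = i then (1:ℝ) else 0) = 0
      rw [if_neg]
      intro hc
      exact hne (Fin.ext (by simp; omega))
    · intro hmem
      exfalso
      apply hmem
      simp only [Finset.mem_filter, Finset.mem_univ, true_and]
      show ((⟨i - 1, by omega⟩ : Fin r) : ℕ) + 1 ≤ k
      simp
      omega
  · rw [if_neg h]
    apply Finset.sum_eq_zero
    intro m hm
    simp only [Finset.mem_filter, Finset.mem_univ, true_and] at hm
    show (if (m : ℕ) + 1 = i then (1:ℝ) else 0) = 0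
    rw [if_neg]
    omega

include hr hS in
lemma fk_vanish (k : ℕ) (hk1 : 1 ≤ k) (hkr : k ≤ r) (hkS : k ∉ S)
    (V : Submodule ℝ (Fin r → ℝ))
    (hV : V = Submodule.span ℝ {v | ∃ i ∈ S, v = simpleRootB r i}) :
    ∀ v ∈ V, fk r k v = 0 := by
  subst hV
  intro v hv
  refine Submodule.span_induction ?_ ?_ ?_ ?_ hv
  · rintro x ⟨i, hiS, rfl⟩
    have hi := S_sub r lam S hr hS i hiS
    have hik : i ≠ k := fun h => hkS (h ▸ hiS)
    unfold simpleRootB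
    split
    · rename_i hir
      rw [fk_std r k r (by omega) le_rfl, if_neg (by omega)]
    · rename_i hir
      rw [fk_sub, fk_std r k i hi.1 hi.2, fk_std r k (i + 1) (by omega) (by omega)]
      by_cases h : i ≤ k
      · rw [if_pos h, if_pos (by omega)]
        ring
      · rw [if_neg h, if_neg (by omega)]
        ring
  · exact fk_zero r k
  · intro x y _ _ hx hy
    rw [fk_add, hx, hy, add_zero]
  · intro c x _ hx
    rw [fk_smul, hx, mul_zero]

lemma telesc (u w : ℕ) (h1 : 1 ≤ u) (h2 : u < w) (h3 : w ≤ r) :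
    stdVec r u - stdVec r w = ∑ k ∈ Finset.Ico u w, simpleRootB r k := by
  have hcong : ∀ k ∈ Finset.Ico u w, simpleRootB r k = stdVec r (u + (k - u)) - stdVec r (u + (k - u) + 1) := by
    intro k hk
    simp only [Finset.mem_Ico] at hk
    rw [simpleRootB, if_neg (by omega)]
    have : u + (k - u) = k := by omega
    rw [this]
  rw [Finset.sum_congr rfl hcong, Finset.sum_Ico_eq_sum_range]
  have hre : ∀ i ∈ Finset.range (w - u),
      stdVec r (u + (u + i - u)) - stdVec r (u + (u + i - u) + 1)
        = (fun m => stdVec r (u + m)) i - (fun m => stdVec r (u + m)) (i + 1) := by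
    intro i _
    have e : u + (u + i - u) = u + i := by omega
    rw [e]
    rfl
  rw [Finset.sum_congr rfl hre, Finset.sum_range_sub' (fun m => stdVec r (u + m)) (w - u)]
  have e1 : u + 0 = u := by omega
  have e2 : u + (w - u) = w := by omega
  rw [e1, e2]

lemma shortexp (u : ℕ) (h1 : 1 ≤ u) (h2 : u ≤ r) :
    stdVec r u = ∑ k ∈ Finset.Icc u r, simpleRootB r k := by
  have hIcc : Finset.Icc u r = Finset.Ico u (r + 1) := by rw [Finset.Ico_add_one_right_eq_Icc]
  rw [hIcc, Finset.sum_Ico_succ_top (by omega : u ≤ r), simpleRootB, if_pos rfl]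
  rcases eq_or_lt_of_le h2 with heq | hlt
  · subst heq
    simp
  · rw [← telesc r u r h1 hlt le_rfl]
    abel

lemma longexp (u v : ℕ) (h1 : 1 ≤ u) (h2 : u < v) (h3 : v ≤ r) :
    stdVec r u + stdVec r v
      = (∑ k ∈ Finset.Ico u v, simpleRootB r k)
        + (2:ℝ) • ∑ k ∈ Finset.Icc v r, simpleRootB r k := by
  rw [← telesc r u v h1 h2 h3, ← shortexp r v (by omega) h3, two_smul]
  abel

lemma root_is_root (q : ℕ × ℕ) (hq : q ∈ P r S) : rho r q ∈ posRootsB r := by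
  obtain ⟨u, w⟩ := q
  simp only [P, Finset.mem_filter, Finset.mem_product, Finset.mem_Icc] at hq
  obtain ⟨⟨⟨hu1, hur⟩, hw1, hw2⟩, huw, hsum, hc⟩ := hq
  unfold rho posRootsB
  dsimp only
  by_cases hwr : w ≤ r
  · rw [if_pos hwr]
    exact Or.inl ⟨u, w, hu1, huw, hwr, Or.inl rfl⟩
  · rw [if_neg hwr]
    by_cases hw2' : w = r + 1
    · rw [if_pos hw2']
      exact Or.inr ⟨u, hu1, hur, rfl⟩
    · rw [if_neg hw2']
      exact Or.inl ⟨u, u + w - (r + 1), hu1, by omega, by omega, Or.inr rfl⟩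

include hr hS in
lemma root_in_V (V : Submodule ℝ (Fin r → ℝ))
    (hV : V = Submodule.span ℝ {v | ∃ i ∈ S, v = simpleRootB r i})
    (q : ℕ × ℕ) (hq : q ∈ P r S) : rho r q ∈ V := by
  obtain ⟨u, w⟩ := q
  simp only [P, Finset.mem_filter, Finset.mem_product, Finset.mem_Icc] at hq
  obtain ⟨⟨⟨hu1, hur⟩, hw1, hw2⟩, huw, hsum, hc⟩ := hq
  subst hV
  unfold rho
  dsimp only
  by_cases hwr : w ≤ r
  · rw [if_pos hwr, telesc r u w hu1 huw hwr]
    apply Submodule.sum_mem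
    intro k hk
    simp only [Finset.mem_Ico] at hk
    exact Submodule.subset_span ⟨k, hc k (by omega) (by omega) (by omega), rfl⟩
  · rw [if_neg hwr]
    by_cases hw2' : w = r + 1
    · rw [if_pos hw2', shortexp r u hu1 (by omega)]
      apply Submodule.sum_mem
      intro k hk
      simp only [Finset.mem_Icc] at hk
      exact Submodule.subset_span ⟨k, hc k (by omega) (by omega) (by omega), rfl⟩
    · rw [if_neg hw2', longexp r u (u + w - (r + 1)) hu1 (by omega) (by omega)]
      apply Submodule.add_mem
      · apply Submodule.sum_mem
        intro k hk
        simp only [Finset.mem_Ico] at hk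
        exact Submodule.subset_span ⟨k, hc k (by omega) (by omega) (by omega), rfl⟩
      · apply Submodule.smul_mem
        apply Submodule.sum_mem
        intro k hk
        simp only [Finset.mem_Icc] at hk
        exact Submodule.subset_span ⟨k, hc k (by omega) (by omega) (by omega), rfl⟩

include hr hS in
lemma roots_eq (V : Submodule ℝ (Fin r → ℝ))
    (hV : V = Submodule.span ℝ {v | ∃ i ∈ S, v = simpleRootB r i}) :
    {a ∈ posRootsB r | a ∈ V} = ↑((P r S).image (rho r)) := by
  ext a
  simp only [Set.mem_setOf_eq, Finset.coe_image, Set.mem_image, Finset.mem_coe]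
  constructor
  · rintro ⟨haroot, haV⟩
    have hfk : ∀ k, 1 ≤ k → k ≤ r → k ∉ S → fk r k a = 0 := fun k hk1 hk2 hk3 =>
      fk_vanish r lam S hr hS k hk1 hk2 hk3 V hV a haV
    rcases haroot with ⟨i, j, h1, h2, h3, hd | hd⟩ | ⟨i, h1, h2, hd⟩
    · refine ⟨(i, j), ?_, ?_⟩
      · simp only [P, Finset.mem_filter, Finset.mem_product, Finset.mem_Icc]
        refine ⟨⟨⟨h1, by omega⟩, by omega, by omega⟩, h2, by omega, ?_⟩
        intro k hk1 hk2 hk3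
        by_contra hkS
        have hvan := hfk k (by omega) hk3 hkS
        rw [hd, fk_sub, fk_std r k i h1 (by omega), fk_std r k j (by omega) h3,
          if_pos hk1, if_neg (by omega)] at hvan
        norm_num at hvan
      · unfold rho
        dsimp only
        rw [if_pos h3, hd]
    · refine ⟨(i, j + r + 1 - i), ?_, ?_⟩
      · simp only [P, Finset.mem_filter, Finset.mem_product, Finset.mem_Icc]
        refine ⟨⟨⟨h1, by omega⟩, by omega, by omega⟩, by omega, by omega, ?_⟩
        intro k hk1 hk2 hk3
        by_contra hkS
        have hvan := hfk k (by omega) hk3 hkS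
        rw [hd, fk_add, fk_std r k i h1 (by omega), fk_std r k j (by omega) h3,
          if_pos hk1] at hvan
        by_cases hjk : j ≤ k
        · rw [if_pos hjk] at hvan
          norm_num at hvan
        · rw [if_neg hjk] at hvan
          norm_num at hvan
      · unfold rho
        dsimp only
        rw [if_neg (by omega), if_neg (by omega)]
        have e : i + (j + r + 1 - i) - (r + 1) = j := by omega
        rw [e, hd]
    · refine ⟨(i, r + 1), ?_, ?_⟩
      · simp only [P, Finset.mem_filter, Finset.mem_product, Finset.mem_Icc]
        refine ⟨⟨⟨h1, h2⟩, by omega, by omega⟩, by omega, by omega, ?_⟩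
        intro k hk1 hk2 hk3
        by_contra hkS
        have hvan := hfk k (by omega) hk3 hkS
        rw [hd, fk_std r k i h1 h2, if_pos hk1] at hvan
        norm_num at hvan
      · unfold rho
        dsimp only
        rw [if_neg (by omega), if_pos rfl, hd]
  · rintro ⟨q, hq, rfl⟩
    exact ⟨root_is_root r S q hq, root_in_V r lam S hr hS V hV q hq⟩

lemma rho_injOn : Set.InjOn (rho r) (P r S) := by
  rintro ⟨u, w⟩ hq ⟨u', w'⟩ hq' heq
  simp only [Finset.mem_coe, P, Finset.mem_filter, Finset.mem_product, Finset.mem_Icc] at hq hq'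
  obtain ⟨⟨⟨hu1, hur⟩, hw1, hw2⟩, huw, hsum, _⟩ := hq
  obtain ⟨⟨⟨hu1', hur'⟩, hw1', hw2'⟩, huw', hsum', _⟩ := hq'
  unfold rho at heq
  dsimp only at heq
  by_cases hwr : w ≤ r <;> by_cases hwr' : w' ≤ r
  · rw [if_pos hwr, if_pos hwr'] at heq
    have huu' : u = u' := by
      by_contra hne
      have e1 := congrFun heq (⟨u - 1, by omega⟩ : Fin r)
      rw [Pi.sub_apply, Pi.sub_apply, stdVec_at r u u (by omega) hu1,
        stdVec_at r w u (by omega) hu1, stdVec_at r u' u (by omega) hu1,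
        stdVec_at r w' u (by omega) hu1, if_pos rfl, if_neg (by omega), if_neg hne] at e1
      by_cases h2 : u = w'
      · rw [if_pos h2] at e1
        norm_num at e1
      · rw [if_neg h2] at e1
        norm_num at e1
    subst huu'
    have hww' : w = w' := by
      by_contra hne
      have e1 := congrFun heq (⟨w - 1, by omega⟩ : Fin r)
      rw [Pi.sub_apply, Pi.sub_apply, stdVec_at r u w (by omega) (by omega),
        stdVec_at r w w (by omega) (by omega),
        stdVec_at r w' w (by omega) (by omega), if_pos rfl, if_neg (by omega),
        if_neg hne] at e1
      norm_num at e1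
    rw [hww']
  · -- w ≤ r, w' > r : compare total sums
    exfalso
    rw [if_pos hwr, if_neg hwr'] at heq
    have htot := congrArg (fun v => ∑ m : Fin r, v m) heq
    simp only [Pi.sub_apply, Pi.add_apply] at htot
    rw [Finset.sum_sub_distrib, sum_std r u hu1 hur, sum_std r w (by omega) hwr] at htot
    by_cases h2 : w' = r + 1
    · rw [if_pos h2, sum_std r u' hu1' hur'] at htot
      norm_num at htot
    · rw [if_neg h2] at htot
      simp only [Pi.add_apply] at htot
      rw [Finset.sum_add_distrib, sum_std r u' hu1' hur',
        sum_std r (u' + w' - (r + 1)) (by omega) (by omega)] at htot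
      norm_num at htot
  · exfalso
    rw [if_neg hwr, if_pos hwr'] at heq
    have htot := congrArg (fun v => ∑ m : Fin r, v m) heq
    simp only [Pi.sub_apply, Pi.add_apply] at htot
    rw [Finset.sum_sub_distrib, sum_std r u' hu1' hur', sum_std r w' (by omega) hwr'] at htot
    by_cases h2 : w = r + 1
    · rw [if_pos h2, sum_std r u hu1 hur] at htot
      norm_num at htot
    · rw [if_neg h2] at htot
      simp only [Pi.add_apply] at htot
      rw [Finset.sum_add_distrib, sum_std r u hu1 hur,
        sum_std r (u + w - (r + 1)) (by omega) (by omega)] at htot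
      norm_num at htot
  · rw [if_neg hwr, if_neg hwr'] at heq
    by_cases h2 : w = r + 1 <;> by_cases h2' : w' = r + 1
    · rw [if_pos h2, if_pos h2'] at heq
      have e1 := congrFun heq (⟨u - 1, by omega⟩ : Fin r)
      rw [stdVec_at r u u (by omega) hu1, stdVec_at r u' u (by omega) hu1, if_pos rfl] at e1
      have huu' : u = u' := by
        by_cases h3 : u = u'
        · exact h3
        · rw [if_neg h3] at e1
          norm_num at e1
      rw [huu', h2, h2']
    · exfalso
      rw [if_pos h2, if_neg h2'] at heq
      have htot := congrArg (fun v => ∑ m : Fin r, v m) heq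
      simp only [Pi.sub_apply, Pi.add_apply] at htot
      rw [sum_std r u hu1 hur, Finset.sum_add_distrib, sum_std r u' hu1' hur',
        sum_std r (u' + w' - (r + 1)) (by omega) (by omega)] at htot
      norm_num at htot
    · exfalso
      rw [if_neg h2, if_pos h2'] at heq
      have htot := congrArg (fun v => ∑ m : Fin r, v m) heq
      simp only [Pi.sub_apply, Pi.add_apply] at htot
      rw [sum_std r u' hu1' hur', Finset.sum_add_distrib, sum_std r u hu1 hur,
        sum_std r (u + w - (r + 1)) (by omega) (by omega)] at htot
      norm_num at htot
    · rw [if_neg h2, if_neg h2'] at heq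
      have hv : u < u + w - (r + 1) := by omega
      have hvr : u + w - (r + 1) ≤ r := by omega
      have hv' : u' < u' + w' - (r + 1) := by omega
      have hvr' : u' + w' - (r + 1) ≤ r := by omega
      have huu' : u = u' := by
        by_contra hne
        have e1 := congrFun heq (⟨u - 1, by omega⟩ : Fin r)
        rw [Pi.add_apply, Pi.add_apply, stdVec_at r u u (by omega) hu1,
          stdVec_at r (u + w - (r + 1)) u (by omega) hu1,
          stdVec_at r u' u (by omega) hu1,
          stdVec_at r (u' + w' - (r + 1)) u (by omega) hu1,
          if_pos (rfl : u = u), if_neg (show ¬ u = u + w - (r + 1) by omega),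
          if_neg (show ¬ u = u' by omega)] at e1
        have huv' : u = u' + w' - (r + 1) := by
          by_contra h4
          rw [if_neg h4] at e1
          norm_num at e1
        have e2 := congrFun heq (⟨u' - 1, by omega⟩ : Fin r)
        rw [Pi.add_apply, Pi.add_apply, stdVec_at r u u' (by omega) hu1',
          stdVec_at r (u + w - (r + 1)) u' (by omega) hu1',
          stdVec_at r u' u' (by omega) hu1',
          stdVec_at r (u' + w' - (r + 1)) u' (by omega) hu1',
          if_pos (rfl : u' = u'), if_neg (show ¬ u' = u by omega),
          if_neg (show ¬ u' = u' + w' - (r + 1) by omega)] at e2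
        have hu'v : u' = u + w - (r + 1) := by
          by_contra h4
          rw [if_neg h4] at e2
          norm_num at e2
        omega
      subst huu'
      have hvv' : u + w - (r + 1) = u + w' - (r + 1) := by
        by_contra hne
        have e1 := congrFun heq (⟨(u + w - (r + 1)) - 1, by omega⟩ : Fin r)
        rw [Pi.add_apply, Pi.add_apply,
          stdVec_at r u (u + w - (r + 1)) (by omega) (by omega),
          stdVec_at r (u + w - (r + 1)) (u + w - (r + 1)) (by omega) (by omega),
          stdVec_at r (u + w' - (r + 1)) (u + w - (r + 1)) (by omega) (by omega),
          if_pos (rfl : u + w - (r + 1) = u + w - (r + 1)),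
          if_neg (show ¬ u + w - (r + 1) = u by omega),
          if_neg (show ¬ u + w - (r + 1) = u + w' - (r + 1) by omega)] at e1
        norm_num at e1
      have : w = w' := by omega
      rw [this]

end main
end BZaux
end BZaux

/-- **Dimension of the type `B`/`C` BZ-polytope.**
For `λ_1 ≥ … ≥ λ_r ≥ 0`, with `S = {i < r : λ_i = λ_{i+1}} ∪ {r if λ_r = 0}` and
`V = span {α_i : i ∈ S}` (type `B_r` simple roots), the affine dimension of `BZ_λ`
equals `r² − #{α ∈ Φ⁺(B_r) : α ∈ V}`. -/
theorem dim_BZ_polytope_BC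
    (r : ℕ) (hr : 1 ≤ r) (lam : ℕ → ℝ)
    (hdec : ∀ i, 1 ≤ i → i < r → lam (i + 1) ≤ lam i) (hnonneg : 0 ≤ lam r)
    (S : Set ℕ)
    (hS : S = {i | 1 ≤ i ∧ i < r ∧ lam i = lam (i + 1)} ∪ {i | i = r ∧ lam r = 0})
    (V : Submodule ℝ (Fin r → ℝ))
    (hV : V = Submodule.span ℝ {v | ∃ i ∈ S, v = simpleRootB r i}) :
    affDim (BZsetBC r lam) = r ^ 2 - Set.ncard {a ∈ posRootsB r | a ∈ V} := by
  classical
  have hdim := BZaux.dim_eq r lam S hdec hnonneg hS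
  have hc1 := BZaux.card_coords r S
  have hc2 := BZaux.card_forced r S
  have hroots := BZaux.roots_eq r lam S hr hS V hV
  have hncard : Set.ncard {a ∈ posRootsB r | a ∈ V} = (BZaux.P r S).card := by
    rw [hroots, Set.ncard_coe_finset, Finset.card_image_of_injOn (BZaux.rho_injOn r S)]
  rw [hdim, hncard]
  omega
end

section
/- Let r ≥ 1, let 1 ≤ a ≤ r, and let λ = (λ_1,…,λ_r) ∈ ℝ^r satisfy λ_1 ≥ … ≥ λ_r and λ_a = λ_{a+1} = … = λ_r = 0. Then every type B/C BZ-pattern (x_{i,j}, y_{i,j}) with top row λ satisfies: y_{i,j} = 0 for all 1 ≤ i ≤ j ≤ r with j − i ≥ a − 1, and x_{i,j} = 0 for all 2 ≤ i ≤ j ≤ r with j − i ≥ a − 1. In particular, with z = r − a + 1, exactly z² coordinates of the pattern (besides the top row) are forced to vanish. -/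
open scoped BigOperators

private lemma triangle_card_sum (r a : ℕ) (ha : 1 ≤ a) (har : a ≤ r) :
    ((Finset.Icc 1 r ×ˢ Finset.Icc 1 r).filter
        (fun q : ℕ × ℕ => 1 ≤ q.1 ∧ q.1 ≤ q.2 ∧ q.2 ≤ r ∧ q.1 + a ≤ q.2 + 1)).card +
      ((Finset.Icc 1 r ×ˢ Finset.Icc 1 r).filter
        (fun q : ℕ × ℕ => 2 ≤ q.1 ∧ q.1 ≤ q.2 ∧ q.2 ≤ r ∧ q.1 + a ≤ q.2 + 1)).card =
    (r - a + 1) ^ 2 := by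
  set z := r - a + 1 with hz
  have c1 : ((Finset.Icc 1 r ×ˢ Finset.Icc 1 r).filter
        (fun q : ℕ × ℕ => 1 ≤ q.1 ∧ q.1 ≤ q.2 ∧ q.2 ≤ r ∧ q.1 + a ≤ q.2 + 1)).card =
      ((Finset.range z ×ˢ Finset.range z).filter (fun p : ℕ × ℕ => p.1 ≤ p.2)).card := by
    apply Finset.card_nbij' (fun q => (q.1 - 1, q.2 - a)) (fun p => (p.1 + 1, p.2 + a))
    · intro q hq
      simp only [Finset.mem_coe, Finset.mem_filter, Finset.mem_product, Finset.mem_Icc, Finset.mem_range] at hq ⊢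
      omega
    · intro p hp
      simp only [Finset.mem_coe, Finset.mem_filter, Finset.mem_product, Finset.mem_Icc, Finset.mem_range] at hp ⊢
      omega
    · intro q hq
      simp only [Finset.mem_coe, Finset.mem_filter, Finset.mem_product, Finset.mem_Icc] at hq
      have : q = (q.1, q.2) := rfl
      rw [this]
      simp only [Prod.mk.injEq]
      omega
    · intro p hp
      simp only [Finset.mem_coe, Finset.mem_filter, Finset.mem_product, Finset.mem_range] at hp
      have : p = (p.1, p.2) := rfl
      rw [this]
      simp only [Prod.mk.injEq]
      omega
  have c2 : ((Finset.Icc 1 r ×ˢ Finset.Icc 1 r).filter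
        (fun q : ℕ × ℕ => 2 ≤ q.1 ∧ q.1 ≤ q.2 ∧ q.2 ≤ r ∧ q.1 + a ≤ q.2 + 1)).card =
      ((Finset.range z ×ˢ Finset.range z).filter (fun p : ℕ × ℕ => ¬ p.1 ≤ p.2)).card := by
    apply Finset.card_nbij' (fun q => (q.2 - a, q.1 - 2)) (fun p => (p.2 + 2, p.1 + a))
    · intro q hq
      simp only [Finset.mem_coe, Finset.mem_filter, Finset.mem_product, Finset.mem_Icc, Finset.mem_range] at hq ⊢
      omega
    · intro p hp
      simp only [Finset.mem_coe, Finset.mem_filter, Finset.mem_product, Finset.mem_Icc, Finset.mem_range] at hp ⊢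
      omega
    · intro q hq
      simp only [Finset.mem_coe, Finset.mem_filter, Finset.mem_product, Finset.mem_Icc] at hq
      have : q = (q.1, q.2) := rfl
      rw [this]
      simp only [Prod.mk.injEq]
      omega
    · intro p hp
      simp only [Finset.mem_coe, Finset.mem_filter, Finset.mem_product, Finset.mem_range] at hp
      have : p = (p.1, p.2) := rfl
      rw [this]
      simp only [Prod.mk.injEq]
      omega
  rw [c1, c2, Finset.card_filter_add_card_filter_not,
    Finset.card_product, Finset.card_range]
  ring

/-- **Vanishing triangle in type `B`/`C` BZ-patterns.**
If `λ_1 ≥ … ≥ λ_r` and `λ_a = … = λ_r = 0`, then in any type `B`/`C` BZ-pattern with top row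
`λ` one has `y_{i,j} = 0` for `1 ≤ i ≤ j ≤ r` with `j − i ≥ a − 1` and `x_{i,j} = 0` for
`2 ≤ i ≤ j ≤ r` with `j − i ≥ a − 1`; with `z = r − a + 1`, exactly `z²` coordinates (besides
the top row) are forced to vanish. -/
theorem vanishing_triangle_BC
    (r a : ℕ) (hr : 1 ≤ r) (ha : 1 ≤ a) (har : a ≤ r) (lam : ℕ → ℝ)
    (hdec : ∀ i, 1 ≤ i → i < r → lam (i + 1) ≤ lam i)
    (hzero : ∀ k, a ≤ k → k ≤ r → lam k = 0)
    (x y : ℕ → ℕ → ℝ)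
    (htop : ∀ j, 1 ≤ j → j ≤ r → x 1 j = lam j)
    (hBZ : IsBZBC r x y) :
    (∀ i j, 1 ≤ i → i ≤ j → j ≤ r → i + a ≤ j + 1 → y i j = 0) ∧
      (∀ i j, 2 ≤ i → i ≤ j → j ≤ r → i + a ≤ j + 1 → x i j = 0) ∧
      Set.ncard {q : ℕ × ℕ | 1 ≤ q.1 ∧ q.1 ≤ q.2 ∧ q.2 ≤ r ∧ q.1 + a ≤ q.2 + 1} +
          Set.ncard {q : ℕ × ℕ | 2 ≤ q.1 ∧ q.1 ≤ q.2 ∧ q.2 ≤ r ∧ q.1 + a ≤ q.2 + 1} =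
        (r - a + 1) ^ 2 := by
  obtain ⟨h1, h2, h3, h4⟩ := hBZ
  -- nonnegativity of y
  have hy0 : ∀ k i j, j + k = r → 1 ≤ i → i ≤ j → 0 ≤ y i j := by
    intro k
    induction k with
    | zero =>
      intro i j hjr hi hij
      have : j = r := by omega
      exact this ▸ h4 i hi (by omega)
    | succ k ih =>
      intro i j hjr hi hij
      have h5 := (h3 i j hi hij (by omega)).1
      have h6 := h1 i (j + 1) hi (by omega) (by omega)
      have h7 := ih i (j + 1) (by omega) hi (by omega)
      linarith
  -- upper bound on x
  have hxub : ∀ i, 1 ≤ i → ∀ j, i ≤ j → j ≤ r → x i j ≤ lam (j - i + 1) := by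
    intro i hi
    induction i, hi using Nat.le_induction with
    | base =>
      intro j hij hjr
      have e : j - 1 + 1 = j := by omega
      rw [htop j hij hjr, e]
    | succ i hi ih =>
      intro j hij hjr
      have hij' : i ≤ j - 1 := by omega
      have e : j - 1 + 1 = j := by omega
      have h5 := (h3 i (j - 1) hi hij' (by omega)).2
      rw [e] at h5
      have h6 := h1 i (j - 1) hi hij' (by omega)
      have h7 := ih (j - 1) hij' (by omega)
      have e2 : j - (i + 1) + 1 = j - 1 - i + 1 := by omega
      rw [e2]
      linarith
  have hxz : ∀ i j, 1 ≤ i → i ≤ j → j ≤ r → i + a ≤ j + 1 → x i j = 0 := by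
    intro i j hi hij hjr hreg
    have hub := hxub i hi j hij hjr
    have hl : lam (j - i + 1) = 0 := hzero _ (by omega) (by omega)
    rw [hl] at hub
    have hyl := hy0 (r - j) i j (by omega) hi hij
    have h5 := h1 i j hi hij hjr
    linarith
  have hyz : ∀ i j, 1 ≤ i → i ≤ j → j ≤ r → i + a ≤ j + 1 → y i j = 0 := by
    intro i j hi hij hjr hreg
    have h5 := h1 i j hi hij hjr
    have hyl := hy0 (r - j) i j (by omega) hi hij
    have := hxz i j hi hij hjr hreg
    linarith
  refine ⟨hyz, fun i j hi => hxz i j (by omega), ?_⟩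
  have e1 : {q : ℕ × ℕ | 1 ≤ q.1 ∧ q.1 ≤ q.2 ∧ q.2 ≤ r ∧ q.1 + a ≤ q.2 + 1} =
      ↑((Finset.Icc 1 r ×ˢ Finset.Icc 1 r).filter
        (fun q : ℕ × ℕ => 1 ≤ q.1 ∧ q.1 ≤ q.2 ∧ q.2 ≤ r ∧ q.1 + a ≤ q.2 + 1)) := by
    ext ⟨i, j⟩
    simp only [Set.mem_setOf_eq, Finset.coe_filter, Finset.mem_product, Finset.mem_Icc]
    omega
  have e2 : {q : ℕ × ℕ | 2 ≤ q.1 ∧ q.1 ≤ q.2 ∧ q.2 ≤ r ∧ q.1 + a ≤ q.2 + 1} =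
      ↑((Finset.Icc 1 r ×ˢ Finset.Icc 1 r).filter
        (fun q : ℕ × ℕ => 2 ≤ q.1 ∧ q.1 ≤ q.2 ∧ q.2 ≤ r ∧ q.1 + a ≤ q.2 + 1)) := by
    ext ⟨i, j⟩
    simp only [Set.mem_setOf_eq, Finset.coe_filter, Finset.mem_product, Finset.mem_Icc]
    omega
  rw [e1, e2, Set.ncard_coe_finset, Set.ncard_coe_finset]
  exact triangle_card_sum r a ha har
end

section
/- Let r ≥ 3, let 1 ≤ a ≤ r − 1, and let λ = (λ_1,…,λ_r) ∈ ℝ^r satisfy λ_1 ≥ … ≥ λ_{r−1} ≥ |λ_r| and λ_a = λ_{a+1} = … = λ_r = 0. Then every type D BZ-pattern (x_{i,j}, y_{i,j}) with top row λ satisfies: y_{i,j} = 0 for all 1 ≤ i ≤ j ≤ r−1 with j − i ≥ a − 1, and x_{i,j} = 0 for all 2 ≤ i ≤ j ≤ r with j − i ≥ a − 1. In particular, with z = r − a + 1, exactly z² − z coordinates of the pattern (besides the top row) are forced to vanish. -/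
open scoped BigOperators

lemma tri_ncard (K : ℕ) : Set.ncard {q : ℕ × ℕ | q.1 + q.2 < K} = (K + 1) * K / 2 := by
  have hset : {q : ℕ × ℕ | q.1 + q.2 < K} =
      ↑((Finset.range K).biUnion fun n => Finset.HasAntidiagonal.antidiagonal n) := by
    ext q
    simp only [Set.mem_setOf_eq, Finset.coe_biUnion, Finset.coe_range, Set.mem_iUnion,
      Set.mem_Iio, Finset.mem_coe, Finset.HasAntidiagonal.mem_antidiagonal]
    constructor
    · intro h; exact ⟨q.1 + q.2, h, by simp⟩
    · rintro ⟨n, hn, h⟩; omega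
  rw [hset, Set.ncard_coe_finset, Finset.card_biUnion]
  · have h1 : ∑ n ∈ Finset.range K, (Finset.HasAntidiagonal.antidiagonal n).card
        = ∑ n ∈ Finset.range K, (n + 1) := by
      refine Finset.sum_congr rfl fun n _ => ?_
      exact Finset.Nat.card_antidiagonal n
    have h2 : ∑ n ∈ Finset.range K, (n + 1) = ∑ n ∈ Finset.range (K + 1), n := by
      rw [Finset.sum_range_succ' (fun n => n) K]
      simp
    rw [h1, h2, Finset.sum_range_id]
    simp
  · intro m _ n _ hmn
    refine Finset.disjoint_left.mpr fun q hq hq' => hmn ?_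
    rw [Finset.HasAntidiagonal.mem_antidiagonal] at hq hq'
    omega

lemma tri_half_add (m : ℕ) : (m + 1) * m / 2 + (m + 1) * m / 2 = (m + 1) ^ 2 - (m + 1) := by
  obtain ⟨k, hk⟩ : Even ((m + 1) * m) := by
    rcases Nat.even_or_odd m with h | h
    · exact h.mul_left _
    · exact (Odd.add_one h).mul_right _
  have hsq : (m + 1) ^ 2 = (m + 1) * m + (m + 1) := by ring
  omega

/-- **Vanishing triangle in type `D` BZ-patterns.**
If `λ_1 ≥ … ≥ λ_{r−1} ≥ |λ_r|` and `λ_a = … = λ_r = 0` (with `a ≤ r − 1`), then in any type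
`D` BZ-pattern with top row `λ` one has `y_{i,j} = 0` for `1 ≤ i ≤ j ≤ r−1` with
`j − i ≥ a − 1` and `x_{i,j} = 0` for `2 ≤ i ≤ j ≤ r` with `j − i ≥ a − 1`; with
`z = r − a + 1`, exactly `z² − z` coordinates (besides the top row) are forced to vanish. -/
theorem vanishing_triangle_D
    (r a : ℕ) (hr : 3 ≤ r) (ha : 1 ≤ a) (har : a ≤ r - 1) (lam : ℕ → ℝ)
    (hdec : ∀ i, 1 ≤ i → i < r - 1 → lam (i + 1) ≤ lam i)
    (habs : |lam r| ≤ lam (r - 1))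
    (hzero : ∀ k, a ≤ k → k ≤ r → lam k = 0)
    (x y : ℕ → ℕ → ℝ)
    (htop : ∀ j, 1 ≤ j → j ≤ r → x 1 j = lam j)
    (hBZ : IsBZD r x y) :
    (∀ i j, 1 ≤ i → i ≤ j → j + 1 ≤ r → i + a ≤ j + 1 → y i j = 0) ∧
      (∀ i j, 2 ≤ i → i ≤ j → j ≤ r → i + a ≤ j + 1 → x i j = 0) ∧
      Set.ncard {q : ℕ × ℕ | 1 ≤ q.1 ∧ q.1 ≤ q.2 ∧ q.2 + 1 ≤ r ∧ q.1 + a ≤ q.2 + 1} +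
          Set.ncard {q : ℕ × ℕ | 2 ≤ q.1 ∧ q.1 ≤ q.2 ∧ q.2 ≤ r ∧ q.1 + a ≤ q.2 + 1} =
        (r - a + 1) ^ 2 - (r - a + 1) := by
  obtain ⟨h1, h2, h3, h4, h5⟩ := hBZ
  -- Upper bounds by chasing to the top row
  have hxle : ∀ i, ∀ j, 1 ≤ i → i ≤ j → j ≤ r → i + a ≤ j + 1 → x i j ≤ 0 := by
    intro i
    induction i with
    | zero => intro j h; omega
    | succ n ih =>
      intro j h1i hij hjr haij
      rcases Nat.eq_zero_or_pos n with hn | hn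
      · subst hn
        rw [htop j (by omega) hjr, hzero j (by omega) hjr]
      · obtain ⟨j', rfl⟩ : ∃ j', j = j' + 1 := ⟨j - 1, by omega⟩
        have hA := (h3 n j' hn (by omega) (by omega)).2
        have hB := h1 n j' hn (by omega) (by omega)
        have hC := ih j' hn (by omega) (by omega) (by omega)
        linarith
  have hyle : ∀ i j, 1 ≤ i → i ≤ j → j + 1 ≤ r → i + a ≤ j + 1 → y i j ≤ 0 := by
    intro i j hi hij hjr hia
    exact le_trans (h1 i j hi hij hjr) (hxle i j hi hij (by omega) hia)
  -- Bottom diagonal: the closing type-D inequalities force zeros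
  obtain ⟨r', rfl⟩ : ∃ r', r = r' + 1 := ⟨r - 1, by omega⟩
  simp only [Nat.add_sub_cancel] at h4 h5 habs hdec
  have key : ∀ i, 1 ≤ i → i + a ≤ r' + 1 →
      y i r' = 0 ∧ x i (r' + 1) = 0 ∧ x (i + 1) (r' + 1) = 0 ∧ x i r' = 0 := by
    intro i hi hir
    have hir' : i ≤ r' := by omega
    have hu : y i r' ≤ 0 := hyle i r' hi hir' (by omega) (by omega)
    have hp := (h3 i r' hi hir' (by omega)).1
    have hq := (h3 i r' hi hir' (by omega)).2
    have hm : x i r' ≤ 0 := hxle i r' hi hir' (by omega) (by omega)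
    rcases lt_or_eq_of_le hir' with hlt | heq
    · have h4' := h4 i hi (by omega)
      have hmin : min (x i r') (x (i + 1) r') ≤ x i r' := min_le_left _ _
      have hu0 : y i r' = 0 := le_antisymm hu (by linarith)
      have hmin0 : 0 ≤ min (x i r') (x (i + 1) r') := by linarith
      refine ⟨hu0, by linarith, by linarith, by linarith⟩
    · subst heq
      have hu0 : y i i = 0 := le_antisymm hu (by linarith)
      refine ⟨hu0, by linarith, by linarith, by linarith⟩
  -- Propagate zeros up the diagonals
  have Ly : ∀ d i j, j + 1 + d = r' + 1 → 1 ≤ i → i ≤ j → i + a ≤ j + 1 → y i j = 0 := by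
    intro d
    induction d with
    | zero =>
      intro i j hj hi hij hia
      have hj' : j = r' := by omega
      subst hj'
      exact (key i hi (by omega)).1
    | succ n ih =>
      intro i j hj hi hij hia
      have hA := (h3 i j hi hij (by omega)).2
      have hB := h1 (i + 1) (j + 1) (by omega) (by omega) (by omega)
      have hC := ih (i + 1) (j + 1) (by omega) (by omega) (by omega) (by omega)
      have hD := hyle i j hi hij (by omega) hia
      linarith
  refine ⟨?_, ?_, ?_⟩
  · intro i j hi hij hjr hia
    exact Ly (r' - j) i j (by omega) hi hij hia
  · intro i j h2i hij hjr hia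
    obtain ⟨i', rfl⟩ : ∃ i', i = i' + 1 := ⟨i - 1, by omega⟩
    rcases eq_or_lt_of_le hjr with heq | hlt
    · subst heq
      exact (key i' (by omega) (by omega)).2.2.1
    · have hy0 : y (i' + 1) j = 0 := Ly (r' - j) (i' + 1) j (by omega) (by omega) hij hia
      have hA := h1 (i' + 1) j (by omega) hij (by omega)
      have hB := hxle (i' + 1) j (by omega) hij (by omega) hia
      linarith
  -- Counting
  · have hinj1 : Function.Injective (fun q : ℕ × ℕ => (q.1 + 1, q.2 + q.1 + a)) := by
      intro ⟨s, t⟩ ⟨s', t'⟩ h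
      simp only [Prod.mk.injEq] at h ⊢
      omega
    have hinj2 : Function.Injective (fun q : ℕ × ℕ => (q.1 + 2, q.2 + q.1 + a + 1)) := by
      intro ⟨s, t⟩ ⟨s', t'⟩ h
      simp only [Prod.mk.injEq] at h ⊢
      omega
    have hs1 : {q : ℕ × ℕ | 1 ≤ q.1 ∧ q.1 ≤ q.2 ∧ q.2 + 1 ≤ r' + 1 ∧ q.1 + a ≤ q.2 + 1}
        = (fun q : ℕ × ℕ => (q.1 + 1, q.2 + q.1 + a)) '' {q | q.1 + q.2 < r' + 1 - a} := by
      ext ⟨i, j⟩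
      simp only [Set.mem_setOf_eq, Set.mem_image, Prod.mk.injEq, Prod.exists]
      constructor
      · rintro ⟨hA, hB, hC, hD⟩
        exact ⟨i - 1, j + 1 - i - a, by omega, by omega, by omega⟩
      · rintro ⟨s, t, hst, hA, hB⟩
        omega
    have hs2 : {q : ℕ × ℕ | 2 ≤ q.1 ∧ q.1 ≤ q.2 ∧ q.2 ≤ r' + 1 ∧ q.1 + a ≤ q.2 + 1}
        = (fun q : ℕ × ℕ => (q.1 + 2, q.2 + q.1 + a + 1)) '' {q | q.1 + q.2 < r' + 1 - a} := by
      ext ⟨i, j⟩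
      simp only [Set.mem_setOf_eq, Set.mem_image, Prod.mk.injEq, Prod.exists]
      constructor
      · rintro ⟨hA, hB, hC, hD⟩
        exact ⟨i - 2, j + 1 - i - a, by omega, by omega, by omega⟩
      · rintro ⟨s, t, hst, hA, hB⟩
        omega
    rw [hs1, hs2, Set.ncard_image_of_injective _ hinj1, Set.ncard_image_of_injective _ hinj2,
      tri_ncard]
    have hm : r' + 1 - a + 1 = (r' + 1 - a) + 1 := rfl
    have := tri_half_add (r' + 1 - a)
    omega
end

section
/- Let r ≥ 3 and let λ = (λ_1,…,λ_r) ∈ ℝ^r satisfy λ_1 ≥ … ≥ λ_{r−1} ≥ |λ_r| and λ_{r−1} + λ_r = 0. Then every type D BZ-pattern (x_{i,j}, y_{i,j}) with top row λ satisfies y_{1,r−1} = x_{2,r}. If moreover λ_{r−2} = λ_{r−1}, then every such pattern also satisfies x_{2,r−1} = λ_{r−1}. -/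
open scoped BigOperators

/-- **Forced equalities in type `D` BZ-patterns when `λ_{r−1} + λ_r = 0`.**
If `λ_1 ≥ … ≥ λ_{r−1} ≥ |λ_r|` and `λ_{r−1} + λ_r = 0`, then every type `D` BZ-pattern with
top row `λ` satisfies `y_{1,r−1} = x_{2,r}`; if moreover `λ_{r−2} = λ_{r−1}`, then also
`x_{2,r−1} = λ_{r−1}`. -/
theorem forced_equalities_D
    (r : ℕ) (hr : 3 ≤ r) (lam : ℕ → ℝ)
    (hdec : ∀ i, 1 ≤ i → i < r - 1 → lam (i + 1) ≤ lam i)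
    (habs : |lam r| ≤ lam (r - 1))
    (hsum : lam (r - 1) + lam r = 0)
    (x y : ℕ → ℕ → ℝ)
    (htop : ∀ j, 1 ≤ j → j ≤ r → x 1 j = lam j)
    (hBZ : IsBZD r x y) :
    y 1 (r - 1) = x 2 r ∧ (lam (r - 2) = lam (r - 1) → x 2 (r - 1) = lam (r - 1)) := by
  obtain ⟨h1, h2, h3, h4, h5⟩ := hBZ
  obtain ⟨s, rfl⟩ : ∃ s, r = s + 3 := ⟨r - 3, by omega⟩
  have e1 : x 1 (s + 3) = lam (s + 3) := htop _ (by omega) (by omega)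
  have e2 : x 1 (s + 2) = lam (s + 2) := htop _ (by omega) (by omega)
  have e3 : x 1 (s + 1) = lam (s + 1) := htop _ (by omega) (by omega)
  have hsum' : lam (s + 2) + lam (s + 3) = 0 := hsum
  have ha : x 2 (s + 3) ≤ y 1 (s + 2) := (h3 1 (s + 2) (by omega) (by omega) (by omega)).2
  have hb : y 1 (s + 2) ≤ x 1 (s + 3) + x 2 (s + 3) + min (x 1 (s + 2)) (x 2 (s + 2)) :=
    h4 1 (by omega) (by omega)
  have hm1 : min (x 1 (s + 2)) (x 2 (s + 2)) ≤ x 1 (s + 2) := min_le_left _ _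
  have hm2 : min (x 1 (s + 2)) (x 2 (s + 2)) ≤ x 2 (s + 2) := min_le_right _ _
  have key : y 1 (s + 2) = x 2 (s + 3) := le_antisymm (by linarith) ha
  refine ⟨key, fun hle => ?_⟩
  have hle' : lam (s + 1) = lam (s + 2) := hle
  show x 2 (s + 2) = lam (s + 2)
  refine le_antisymm ?_ ?_
  · have hc : x 2 (s + 2) ≤ y 1 (s + 1) := (h3 1 (s + 1) (by omega) (by omega) (by omega)).2
    have hd : y 1 (s + 1) ≤ x 1 (s + 1) := h1 1 (s + 1) (by omega) (by omega) (by omega)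
    linarith
  · linarith
end

section
/- Let r ≥ 1 and let λ = (λ_1,…,λ_r) ∈ ℝ^r satisfy λ_1 > λ_2 > … > λ_r > 0. Then the type B/C BZ-polytope BZ_λ has nonempty topological interior in ℝ^{r²}; equivalently, its affine dimension equals r². -/
open scoped BigOperators

noncomputable section BZAux
namespace BZAux

def T1 (r : ℕ) : Finset (ℕ × ℕ) :=
  (Finset.Icc 1 r ×ˢ Finset.Icc 1 r).filter fun p => 2 ≤ p.1 ∧ p.1 ≤ p.2

def T2 (r : ℕ) : Finset (ℕ × ℕ) :=
  (Finset.Icc 1 r ×ˢ Finset.Icc 1 r).filter fun p => p.1 ≤ p.2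

lemma mem_T1 {r : ℕ} {p : ℕ × ℕ} : p ∈ T1 r ↔ 2 ≤ p.1 ∧ p.1 ≤ p.2 ∧ p.2 ≤ r := by
  simp only [T1, Finset.mem_filter, Finset.mem_product, Finset.mem_Icc]; omega

lemma mem_T2 {r : ℕ} {p : ℕ × ℕ} : p ∈ T2 r ↔ 1 ≤ p.1 ∧ p.1 ≤ p.2 ∧ p.2 ≤ r := by
  simp only [T2, Finset.mem_filter, Finset.mem_product, Finset.mem_Icc]; omega

lemma card_add_card (r : ℕ) : (T1 r).card + (T2 r).card = r ^ 2 := by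
  classical
  have h1 : (T1 r).card
      = (((Finset.Icc 1 r ×ˢ Finset.Icc 1 r)).filter fun p : ℕ × ℕ => ¬ p.1 ≤ p.2).card := by
    apply Finset.card_nbij' (fun p => (p.2, p.1 - 1)) (fun p => (p.2 + 1, p.1))
    · intro a ha
      rw [Finset.mem_coe, mem_T1] at ha
      simp only [Finset.mem_coe, Finset.mem_filter, Finset.mem_product, Finset.mem_Icc]
      omega
    · intro a ha
      simp only [Finset.mem_coe, Finset.mem_filter, Finset.mem_product, Finset.mem_Icc] at ha
      rw [Finset.mem_coe, mem_T1]
      dsimp only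
      omega
    · intro a ha
      rw [Finset.mem_coe, mem_T1] at ha
      rw [Prod.ext_iff]
      constructor <;> simp <;> omega
    · intro a ha
      simp only [Finset.mem_coe, Finset.mem_filter, Finset.mem_product, Finset.mem_Icc] at ha
      rw [Prod.ext_iff]
      constructor <;> simp <;> omega
  have h2 : (T2 r).card + (T1 r).card = ((Finset.Icc 1 r ×ˢ Finset.Icc 1 r)).card := by
    rw [h1]
    exact Finset.card_filter_add_card_filter_not _
  have h3 : ((Finset.Icc 1 r ×ˢ Finset.Icc 1 r)).card = r ^ 2 := by
    rw [Finset.card_product, Nat.card_Icc, pow_two]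
    simp
  omega


/-- The ambient coordinate subspace. -/
def U (r : ℕ) : Submodule ℝ ((ℕ → ℕ → ℝ) × (ℕ → ℕ → ℝ)) where
  carrier := {p | (∀ i j, ¬(2 ≤ i ∧ i ≤ j ∧ j ≤ r) → p.1 i j = 0) ∧
                  (∀ i j, ¬(1 ≤ i ∧ i ≤ j ∧ j ≤ r) → p.2 i j = 0)}
  add_mem' := by
    rintro a b ⟨ha1, ha2⟩ ⟨hb1, hb2⟩
    refine ⟨fun i j h => ?_, fun i j h => ?_⟩
    · show a.1 i j + b.1 i j = 0
      rw [ha1 i j h, hb1 i j h, add_zero]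
    · show a.2 i j + b.2 i j = 0
      rw [ha2 i j h, hb2 i j h, add_zero]
  zero_mem' := ⟨fun _ _ _ => rfl, fun _ _ _ => rfl⟩
  smul_mem' := by
    rintro c a ⟨ha1, ha2⟩
    refine ⟨fun i j h => ?_, fun i j h => ?_⟩
    · show c * a.1 i j = 0
      rw [ha1 i j h, mul_zero]
    · show c * a.2 i j = 0
      rw [ha2 i j h, mul_zero]

/-- Coordinate-extraction linear map. -/
def ψ (r : ℕ) : ((ℕ → ℕ → ℝ) × (ℕ → ℕ → ℝ)) →ₗ[ℝ] ((↥(T1 r) ⊕ ↥(T2 r)) → ℝ) where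
  toFun p := Sum.elim (fun a => p.1 (a : ℕ × ℕ).1 (a : ℕ × ℕ).2)
    (fun a => p.2 (a : ℕ × ℕ).1 (a : ℕ × ℕ).2)
  map_add' a b := by funext s; cases s <;> rfl
  map_smul' c a := by funext s; cases s <;> rfl

lemma psi_inj (r : ℕ) : ∀ p ∈ U r, ψ r p = 0 → p = 0 := by
  rintro p ⟨h1, h2⟩ hψ
  have key1 : ∀ i j, p.1 i j = 0 := by
    intro i j
    by_cases h : 2 ≤ i ∧ i ≤ j ∧ j ≤ r
    · exact congrFun hψ (Sum.inl ⟨(i, j), mem_T1.2 ⟨h.1, h.2.1, h.2.2⟩⟩)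
    · exact h1 i j h
  have key2 : ∀ i j, p.2 i j = 0 := by
    intro i j
    by_cases h : 1 ≤ i ∧ i ≤ j ∧ j ≤ r
    · exact congrFun hψ (Sum.inr ⟨(i, j), mem_T2.2 ⟨h.1, h.2.1, h.2.2⟩⟩)
    · exact h2 i j h
  exact Prod.ext (funext fun i => funext fun j => key1 i j)
    (funext fun i => funext fun j => key2 i j)

instance finU (r : ℕ) : FiniteDimensional ℝ (U r) := by
  apply FiniteDimensional.of_injective ((ψ r).comp (U r).subtype)
  intro a b hab
  have : (a : (ℕ → ℕ → ℝ) × (ℕ → ℕ → ℝ)) - b ∈ U r := (U r).sub_mem a.2 b.2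
  have hz : ψ r ((a : (ℕ → ℕ → ℝ) × (ℕ → ℕ → ℝ)) - b) = 0 := by
    rw [map_sub]
    simpa [sub_eq_zero] using hab
  have := psi_inj r _ this hz
  exact Subtype.ext (by rwa [sub_eq_zero] at this)

lemma finrank_U_le (r : ℕ) : Module.finrank ℝ (U r) ≤ (T1 r).card + (T2 r).card := by
  have hinj : Function.Injective ((ψ r).comp (U r).subtype) := by
    intro a b hab
    have hz : ψ r ((a : (ℕ → ℕ → ℝ) × (ℕ → ℕ → ℝ)) - b) = 0 := by
      rw [map_sub]; simpa [sub_eq_zero] using hab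
    have := psi_inj r _ ((U r).sub_mem a.2 b.2) hz
    exact Subtype.ext (by rwa [sub_eq_zero] at this)
  have := LinearMap.finrank_le_finrank_of_injective hinj
  rwa [Module.finrank_fintype_fun_eq_card, Fintype.card_sum, Fintype.card_coe,
    Fintype.card_coe] at this

def ex (a : ℕ × ℕ) : (ℕ → ℕ → ℝ) × (ℕ → ℕ → ℝ) :=
  (fun i j => if i = a.1 ∧ j = a.2 then 1 else 0, 0)

def ey (a : ℕ × ℕ) : (ℕ → ℕ → ℝ) × (ℕ → ℕ → ℝ) :=
  (0, fun i j => if i = a.1 ∧ j = a.2 then 1 else 0)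

def fam (r : ℕ) : (↥(T1 r) ⊕ ↥(T2 r)) → ((ℕ → ℕ → ℝ) × (ℕ → ℕ → ℝ)) :=
  Sum.elim (fun a => ex a) (fun a => ey a)

lemma psi_fam (r : ℕ) (s : ↥(T1 r) ⊕ ↥(T2 r)) : ψ r (fam r s) = Pi.single s 1 := by
  classical
  funext t
  rcases s with a | a <;> rcases t with b | b <;>
    simp only [ψ, fam, ex, ey, LinearMap.coe_mk, AddHom.coe_mk, Sum.elim_inl, Sum.elim_inr,
      Pi.single_apply, Pi.zero_apply]
  · by_cases h : b = a
    · subst h; simp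
    · rw [if_neg, if_neg (by simpa using h)]
      intro hc
      exact h (Subtype.ext (Prod.ext hc.1 hc.2))
  · rw [if_neg (by simp)]
  · rw [if_neg (by simp)]
  · by_cases h : b = a
    · subst h; simp
    · rw [if_neg, if_neg (by simpa using h)]
      intro hc
      exact h (Subtype.ext (Prod.ext hc.1 hc.2))

lemma fam_li (r : ℕ) : LinearIndependent ℝ (fam r) := by
  classical
  apply LinearIndependent.of_comp (ψ r)
  have h : (⇑(ψ r) ∘ fam r) = fun s => Pi.single s 1 := funext fun s => psi_fam r s
  rw [h]
  have hb := (Pi.basisFun ℝ (↥(T1 r) ⊕ ↥(T2 r))).linearIndependent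
  have h2 : ⇑(Pi.basisFun ℝ (↥(T1 r) ⊕ ↥(T2 r))) = fun s => Pi.single s (1 : ℝ) :=
    funext fun i => Pi.basisFun_apply ℝ _ i
  rwa [h2] at hb




/-- The generic interior point of the BZ polytope. -/
def P0 (r : ℕ) (lam : ℕ → ℝ) (δ : ℝ) : (ℕ → ℕ → ℝ) × (ℕ → ℕ → ℝ) :=
  (fun i j => if 1 ≤ i ∧ i ≤ j ∧ j ≤ r then lam j - ((i : ℝ) - 1) * δ else 0,
   fun i j => if 1 ≤ i ∧ i ≤ j ∧ j ≤ r then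
      (if j = r then (lam r - (i : ℝ) * δ) / 2
       else (lam j + lam (j + 1)) / 2 - (2 * (i : ℝ) - 1) * δ / 2)
     else 0)

lemma mem_of_close (r : ℕ) (hr : 1 ≤ r) (lam : ℕ → ℝ) (m : ℝ)
    (hm : 0 < m) (hmr : m ≤ lam r) (hgap : ∀ j, 1 ≤ j → j < r → m ≤ lam j - lam (j + 1))
    (q : (ℕ → ℕ → ℝ) × (ℕ → ℕ → ℝ))
    (hq1 : ∀ j, 1 ≤ j → j ≤ r → q.1 1 j = lam j)
    (hz1 : ∀ i j, ¬(1 ≤ i ∧ i ≤ j ∧ j ≤ r) → q.1 i j = 0)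
    (hz2 : ∀ i j, ¬(1 ≤ i ∧ i ≤ j ∧ j ≤ r) → q.2 i j = 0)
    (hc1 : ∀ i j, |q.1 i j - (P0 r lam (m / (2 * r))).1 i j| ≤ m / 8)
    (hc2 : ∀ i j, |q.2 i j - (P0 r lam (m / (2 * r))).2 i j| ≤ m / 8) :
    q ∈ BZsetBC r lam := by
  set δ : ℝ := m / (2 * r) with hδdef
  have hr0 : (0 : ℝ) < r := by exact_mod_cast hr
  have hδpos : 0 < δ := by positivity
  have hscaled : ∀ i : ℕ, i ≤ r → (i : ℝ) * δ ≤ m / 2 := by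
    intro i hi
    have h1 : (i : ℝ) ≤ (r : ℝ) := by exact_mod_cast hi
    have h2 : (r : ℝ) * δ = m / 2 := by
      rw [hδdef]; field_simp
    nlinarith
  have hδle : δ ≤ m / 2 := by
    have := hscaled 1 hr; simpa using this
  refine ⟨hq1, ⟨?_, ?_, ?_, ?_⟩, hz1, hz2⟩
  · -- y i j ≤ x i j
    intro i j h1 hij hjr
    have hx := hc1 i j
    have hy := hc2 i j
    have hcond : 1 ≤ i ∧ i ≤ j ∧ j ≤ r := ⟨h1, hij, hjr⟩
    rw [abs_le] at hx hy
    simp only [P0, if_pos hcond] at hx hy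
    have hri : (i : ℝ) * δ ≤ m / 2 := hscaled i (le_trans hij hjr)
    by_cases hjr' : j = r
    · subst hjr'
      rw [if_pos rfl] at hy
      have e1 : (((i : ℝ) - 1)) * δ = (i : ℝ) * δ - δ := by ring
      rw [e1] at hx
      linarith [hx.1, hx.2, hy.1, hy.2]
    · rw [if_neg hjr'] at hy
      have hjlt : j < r := lt_of_le_of_ne hjr hjr'
      have hg := hgap j (by omega) hjlt
      have e1 : (((i : ℝ) - 1)) * δ = (i : ℝ) * δ - δ := by ring
      have e2 : (2 * (i : ℝ) - 1) * δ / 2 = (i : ℝ) * δ - δ / 2 := by ring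
      rw [e1] at hx; rw [e2] at hy
      linarith [hx.1, hx.2, hy.1, hy.2]
  · -- y i j ≤ x (i+1) j
    intro i j h1 hij hjr
    have hx := hc1 (i + 1) j
    have hy := hc2 i j
    have hcondx : 1 ≤ i + 1 ∧ i + 1 ≤ j ∧ j ≤ r := ⟨by omega, by omega, hjr⟩
    have hcondy : 1 ≤ i ∧ i ≤ j ∧ j ≤ r := ⟨h1, le_of_lt hij, hjr⟩
    rw [abs_le] at hx hy
    simp only [P0, if_pos hcondx, if_pos hcondy] at hx hy
    have hri : (i : ℝ) * δ ≤ m / 2 := hscaled i (by omega)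
    push_cast at hx
    by_cases hjr' : j = r
    · subst hjr'
      rw [if_pos rfl] at hy
      have e1 : (((i : ℝ) + 1 - 1)) * δ = (i : ℝ) * δ := by ring
      rw [e1] at hx
      linarith [hx.1, hx.2, hy.1, hy.2]
    · rw [if_neg hjr'] at hy
      have hjlt : j < r := lt_of_le_of_ne hjr hjr'
      have hg := hgap j (by omega) hjlt
      have e1 : (((i : ℝ) + 1 - 1)) * δ = (i : ℝ) * δ := by ring
      have e2 : (2 * (i : ℝ) - 1) * δ / 2 = (i : ℝ) * δ - δ / 2 := by ring
      rw [e1] at hx; rw [e2] at hy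
      linarith [hx.1, hx.2, hy.1, hy.2]
  · -- x i (j+1) ≤ y i j and x (i+1) (j+1) ≤ y i j
    intro i j h1 hij hjr
    have hx1 := hc1 i (j + 1)
    have hx2 := hc1 (i + 1) (j + 1)
    have hy := hc2 i j
    have hcond1 : 1 ≤ i ∧ i ≤ j + 1 ∧ j + 1 ≤ r := ⟨h1, by omega, hjr⟩
    have hcond2 : 1 ≤ i + 1 ∧ i + 1 ≤ j + 1 ∧ j + 1 ≤ r := ⟨by omega, by omega, hjr⟩
    have hcondy : 1 ≤ i ∧ i ≤ j ∧ j ≤ r := ⟨h1, hij, by omega⟩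
    rw [abs_le] at hx1 hx2 hy
    simp only [P0, if_pos hcond1, if_pos hcond2, if_pos hcondy] at hx1 hx2 hy
    rw [if_neg (by omega : ¬ j = r)] at hy
    have hg := hgap j (by omega) (by omega)
    push_cast at hx2
    have e1 : (((i : ℝ) - 1)) * δ = (i : ℝ) * δ - δ := by ring
    have e2 : (((i : ℝ) + 1 - 1)) * δ = (i : ℝ) * δ := by ring
    have e3 : (2 * (i : ℝ) - 1) * δ / 2 = (i : ℝ) * δ - δ / 2 := by ring
    rw [e1] at hx1; rw [e2] at hx2; rw [e3] at hy
    constructor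
    · linarith [hx1.1, hx1.2, hy.1, hy.2]
    · linarith [hx2.1, hx2.2, hy.1, hy.2]
  · -- 0 ≤ y i r
    intro i h1 hir
    have hy := hc2 i r
    have hcond : 1 ≤ i ∧ i ≤ r ∧ r ≤ r := ⟨h1, hir, le_refl r⟩
    rw [abs_le] at hy
    simp only [P0, if_pos hcond, if_true, ite_true] at hy
    have hri : (i : ℝ) * δ ≤ m / 2 := hscaled i hir
    linarith [hy.1, hy.2]


end BZAux
end BZAux

/-- **Full-dimensionality of the type `B`/`C` BZ-polytope for strictly dominant `λ`.**
If `λ_1 > λ_2 > … > λ_r > 0`, then the type `B`/`C` BZ-polytope `BZ_λ` is full-dimensional: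
its affine dimension equals `r²` (equivalently, it has nonempty interior in `ℝ^{r²}`). -/
theorem BZ_polytope_BC_full_dimensional
    (r : ℕ) (hr : 1 ≤ r) (lam : ℕ → ℝ)
    (hdec : ∀ i, 1 ≤ i → i < r → lam (i + 1) < lam i) (hpos : 0 < lam r) :
    affDim (BZsetBC r lam) = r ^ 2 := by
  classical
  -- a uniform positive lower bound for the gaps and `lam r`
  obtain ⟨m, hm, hmr, hgap⟩ :
      ∃ m : ℝ, 0 < m ∧ m ≤ lam r ∧ ∀ j, 1 ≤ j → j < r → m ≤ lam j - lam (j + 1) := by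
    have hne : (Finset.Icc 1 r).Nonempty := ⟨1, Finset.mem_Icc.2 ⟨le_refl 1, hr⟩⟩
    set f : ℕ → ℝ := fun j => if j = r then lam r else lam j - lam (j + 1) with hf
    refine ⟨(Finset.Icc 1 r).inf' hne f, ?_, ?_, ?_⟩
    · rw [Finset.lt_inf'_iff]
      intro j hj
      rw [Finset.mem_Icc] at hj
      by_cases h : j = r
      · simp only [hf, if_pos h, h]
        exact hpos
      · simp only [hf, if_neg h]
        have := hdec j hj.1 (lt_of_le_of_ne hj.2 h)
        linarith
    · have := Finset.inf'_le f (Finset.mem_Icc.2 ⟨hr, le_refl r⟩)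
      exact le_trans this (by simp [hf])
    · intro j h1 hjr
      have := Finset.inf'_le f (Finset.mem_Icc.2 ⟨h1, le_of_lt hjr⟩)
      exact le_trans this (by simp [hf, Nat.ne_of_lt hjr])
  have hmne : m ≠ 0 := ne_of_gt hm
  set δ : ℝ := m / (2 * r) with hδdef
  -- the base point is in the polytope
  have hP0mem : BZAux.P0 r lam δ ∈ BZsetBC r lam := by
    apply BZAux.mem_of_close r hr lam m hm hmr hgap
    · intro j h1 hjr
      simp [BZAux.P0, h1, hjr]
    · intro i j h
      simp only [BZAux.P0]
      exact if_neg h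
    · intro i j h
      simp only [BZAux.P0]
      exact if_neg h
    · intro i j
      simp only [hδdef, sub_self, abs_zero]
      positivity
    · intro i j
      simp only [hδdef, sub_self, abs_zero]
      positivity
  -- perturbed points are in the polytope
  have hpert : ∀ s : ↥(BZAux.T1 r) ⊕ ↥(BZAux.T2 r),
      BZAux.P0 r lam δ + (m / 8) • BZAux.fam r s ∈ BZsetBC r lam := by
    intro s
    apply BZAux.mem_of_close r hr lam m hm hmr hgap
    · intro j h1 hjr
      have hfz : (BZAux.fam r s).1 1 j = 0 := by
        rcases s with a | a
        · have ha := BZAux.mem_T1.1 a.2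
          simp only [BZAux.fam, Sum.elim_inl, BZAux.ex]
          rw [if_neg]
          rintro ⟨hc1, -⟩
          omega
        · rfl
      show (BZAux.P0 r lam δ).1 1 j + (m / 8) * (BZAux.fam r s).1 1 j = lam j
      rw [hfz, mul_zero, add_zero]
      simp [BZAux.P0, h1, hjr]
    · intro i j h
      have hfz : (BZAux.fam r s).1 i j = 0 := by
        rcases s with a | a
        · have ha := BZAux.mem_T1.1 a.2
          simp only [BZAux.fam, Sum.elim_inl, BZAux.ex]
          rw [if_neg]
          rintro ⟨hc1, hc2⟩
          subst hc1; subst hc2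
          exact h ⟨by omega, ha.2.1, ha.2.2⟩
        · rfl
      show (BZAux.P0 r lam δ).1 i j + (m / 8) * (BZAux.fam r s).1 i j = 0
      rw [hfz, mul_zero, add_zero]
      simp only [BZAux.P0]
      exact if_neg h
    · intro i j h
      have hfz : (BZAux.fam r s).2 i j = 0 := by
        rcases s with a | a
        · rfl
        · have ha := BZAux.mem_T2.1 a.2
          simp only [BZAux.fam, Sum.elim_inr, BZAux.ey]
          rw [if_neg]
          rintro ⟨hc1, hc2⟩
          subst hc1; subst hc2
          exact h ⟨ha.1, ha.2.1, ha.2.2⟩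
      show (BZAux.P0 r lam δ).2 i j + (m / 8) * (BZAux.fam r s).2 i j = 0
      rw [hfz, mul_zero, add_zero]
      simp only [BZAux.P0]
      exact if_neg h
    · intro i j
      show |(BZAux.P0 r lam δ).1 i j + (m / 8) * (BZAux.fam r s).1 i j
          - (BZAux.P0 r lam δ).1 i j| ≤ m / 8
      rw [add_sub_cancel_left, abs_mul]
      have h1 : |(BZAux.fam r s).1 i j| ≤ 1 := by
        rcases s with a | a
        · simp only [BZAux.fam, Sum.elim_inl, BZAux.ex]
          split <;> simp
        · simp only [BZAux.fam, Sum.elim_inr, BZAux.ey, Prod.fst, Pi.zero_apply]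
          norm_num
      have h2 : |m / 8| = m / 8 := abs_of_pos (by positivity)
      rw [h2]
      nlinarith [abs_nonneg ((BZAux.fam r s).1 i j)]
    · intro i j
      show |(BZAux.P0 r lam δ).2 i j + (m / 8) * (BZAux.fam r s).2 i j
          - (BZAux.P0 r lam δ).2 i j| ≤ m / 8
      rw [add_sub_cancel_left, abs_mul]
      have h1 : |(BZAux.fam r s).2 i j| ≤ 1 := by
        rcases s with a | a
        · simp only [BZAux.fam, Sum.elim_inl, BZAux.ex, Prod.snd, Pi.zero_apply]
          norm_num
        · simp only [BZAux.fam, Sum.elim_inr, BZAux.ey]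
          split <;> simp
      have h2 : |m / 8| = m / 8 := abs_of_pos (by positivity)
      rw [h2]
      nlinarith [abs_nonneg ((BZAux.fam r s).2 i j)]
  -- the coordinate vectors lie in the vector span
  have hmemspan : ∀ s : ↥(BZAux.T1 r) ⊕ ↥(BZAux.T2 r),
      BZAux.fam r s ∈ vectorSpan ℝ (BZsetBC r lam) := by
    intro s
    have hv := vsub_mem_vectorSpan ℝ (hpert s) hP0mem
    have he : (BZAux.P0 r lam δ + (m / 8) • BZAux.fam r s) -ᵥ BZAux.P0 r lam δ
        = (m / 8) • BZAux.fam r s := by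
      rw [vsub_eq_sub, add_sub_cancel_left]
    rw [he] at hv
    have := Submodule.smul_mem _ (8 / m) hv
    rwa [smul_smul, show (8 / m) * (m / 8) = 1 by field_simp, one_smul] at this
  -- the vector span is contained in the coordinate subspace
  have hle : vectorSpan ℝ (BZsetBC r lam) ≤ BZAux.U r := by
    rw [vectorSpan_def]
    refine Submodule.span_le.2 ?_
    rintro v ⟨p, hp, q, hq, rfl⟩
    refine ⟨fun i j h => ?_, fun i j h => ?_⟩
    · show p.1 i j - q.1 i j = 0
      by_cases hreg : 1 ≤ i ∧ i ≤ j ∧ j ≤ r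
      · have hi1 : i = 1 := by omega
        subst hi1
        rw [hp.1 j hreg.2.1 hreg.2.2, hq.1 j hreg.2.1 hreg.2.2, sub_self]
      · rw [hp.2.2.1 i j hreg, hq.2.2.1 i j hreg, sub_self]
    · show p.2 i j - q.2 i j = 0
      rw [hp.2.2.2 i j h, hq.2.2.2 i j h, sub_self]
  show Module.finrank ℝ (vectorSpan ℝ (BZsetBC r lam)) = r ^ 2
  have hfinU : FiniteDimensional ℝ (BZAux.U r) := BZAux.finU r
  have hfinV : FiniteDimensional ℝ (vectorSpan ℝ (BZsetBC r lam)) :=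
    Submodule.finiteDimensional_of_le hle
  refine le_antisymm ?_ ?_
  · calc Module.finrank ℝ (vectorSpan ℝ (BZsetBC r lam))
        ≤ Module.finrank ℝ (BZAux.U r) := Submodule.finrank_mono hle
      _ ≤ (BZAux.T1 r).card + (BZAux.T2 r).card := BZAux.finrank_U_le r
      _ = r ^ 2 := BZAux.card_add_card r
  · have hli : LinearIndependent ℝ
        (fun s : ↥(BZAux.T1 r) ⊕ ↥(BZAux.T2 r) =>
          (⟨BZAux.fam r s, hmemspan s⟩ : ↥(vectorSpan ℝ (BZsetBC r lam)))) := by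
      apply LinearIndependent.of_comp (vectorSpan ℝ (BZsetBC r lam)).subtype
      exact BZAux.fam_li r
    have := hli.fintype_card_le_finrank
    rwa [Fintype.card_sum, Fintype.card_coe, Fintype.card_coe, BZAux.card_add_card r] at this
end

section
/- Let r ≥ 1 and let λ, μ ∈ ℝ^r satisfy λ_1 ≥ … ≥ λ_r ≥ 0 and μ_1 ≥ … ≥ μ_r ≥ 0. Suppose λ − μ = Σ_{i=1}^{r} c_i α_i with every c_i > 0, where α_i = e_i − e_{i+1} for 1 ≤ i ≤ r−1 and α_r = e_r. Then μ lies in the topological interior (in ℝ^r) of the convex hull of the set {(ε_1 λ_{σ(1)}, …, ε_r λ_{σ(r)}) : σ a permutation of {1,…,r}, ε ∈ {−1,1}^r} of all signed permutations of λ. -/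
open scoped BigOperators

private lemma icc_telescope_aux (r : ℕ) (f : ℕ → ℝ) :
    ∑ i ∈ Finset.Icc 1 r, (f i - f (i + 1)) = f 1 - f (r + 1) := by
  induction r with
  | zero => simp
  | succ n ih =>
    rw [Finset.sum_Icc_succ_top (by omega : 1 ≤ n + 1), ih]
    ring

/-- **Interior of the weight polytope (hyperoctahedral case).**
Let `λ_1 ≥ … ≥ λ_r ≥ 0` and `μ_1 ≥ … ≥ μ_r ≥ 0` with `λ − μ = ∑ c_i α_i`, all `c_i > 0`,
where `α_i = e_i − e_{i+1}` for `i < r` and `α_r = e_r`.  Then `μ` lies in the topological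
interior of the convex hull of all signed permutations of `λ`. -/
theorem dominant_weight_mem_interior_weight_polytope
    (r : ℕ) (hr : 1 ≤ r) (lam mu : ℕ → ℝ)
    (hlam_dec : ∀ i, 1 ≤ i → i < r → lam (i + 1) ≤ lam i) (hlam_nonneg : 0 ≤ lam r)
    (hmu_dec : ∀ i, 1 ≤ i → i < r → mu (i + 1) ≤ mu i) (hmu_nonneg : 0 ≤ mu r)
    (c : ℕ → ℝ) (hc : ∀ i, 1 ≤ i → i ≤ r → 0 < c i)
    (hdiff : (fun k : Fin r => lam ((k : ℕ) + 1) - mu ((k : ℕ) + 1)) =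
      ∑ i ∈ Finset.Icc 1 r, c i • simpleRootB r i) :
    (fun k : Fin r => mu ((k : ℕ) + 1)) ∈
      interior (convexHull ℝ
        {w : Fin r → ℝ | ∃ σ : Equiv.Perm (Fin r), ∃ ε : Fin r → ℝ,
          (∀ k, ε k = 1 ∨ ε k = -1) ∧ w = fun k => ε k * lam ((σ k : ℕ) + 1)}) := by
    classical
  have hr0 : 0 < r := hr
  have hrR : (0:ℝ) < (r:ℝ) := by exact_mod_cast hr0
  set muv : Fin r → ℝ := fun k : Fin r => mu ((k : ℕ) + 1) with hmuvdef
  set lamv : Fin r → ℝ := fun k : Fin r => lam ((k : ℕ) + 1) with hlamvdef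
  set S : Set (Fin r → ℝ) := {w : Fin r → ℝ | ∃ σ : Equiv.Perm (Fin r), ∃ ε : Fin r → ℝ,
          (∀ k, ε k = 1 ∨ ε k = -1) ∧ w = fun k => ε k * lam ((σ k : ℕ) + 1)} with hSdef
  -- monotonicity facts
  have hmu_le : ∀ i j : ℕ, 1 ≤ i → i ≤ j → j ≤ r → mu j ≤ mu i := by
    intro i j hi hij hjr
    induction j with
    | zero => omega
    | succ n ih =>
      rcases Nat.lt_or_ge i (n + 1) with h | h
      · exact le_trans (hmu_dec n (by omega) (by omega)) (ih (by omega) (by omega))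
      · have : i = n + 1 := by omega
        rw [this]
  have hmuv_nonneg : ∀ k : Fin r, 0 ≤ muv k := by
    intro k
    exact le_trans hmu_nonneg (hmu_le ((k:ℕ)+1) r (by omega) (by have := k.isLt; omega) le_rfl)
  have hmuv_anti : ∀ i j : Fin r, i ≤ j → muv j ≤ muv i := by
    intro i j hij
    exact hmu_le ((i:ℕ)+1) ((j:ℕ)+1) (by omega) (by have := (Fin.le_def).1 hij; omega)
      (by have := j.isLt; omega)
  -- the minimum coefficient
  have hne : (Finset.Icc 1 r).Nonempty := ⟨1, by rw [Finset.mem_Icc]; omega⟩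
  set cm : ℝ := (Finset.Icc 1 r).inf' hne c with hcmdef
  have hcm_le : ∀ i ∈ Finset.Icc 1 r, cm ≤ c i := fun i hi => Finset.inf'_le c hi
  have hcm_pos : 0 < cm := by
    rw [hcmdef, Finset.lt_inf'_iff]
    intro i hi; rw [Finset.mem_Icc] at hi; exact hc i hi.1 hi.2
  have hδpos : 0 < cm / (r:ℝ) := div_pos hcm_pos hrR
  -- coordinatewise identity
  have hco : ∀ k : Fin r, lamv k - muv k = ∑ i ∈ Finset.Icc 1 r, c i * simpleRootB r i k := by
    intro k
    have := congrFun hdiff k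
    simpa [Finset.sum_apply, Pi.smul_apply, smul_eq_mul, hmuvdef, hlamvdef] using this
  -- key inequality
  have key : ∀ x : Fin r → ℝ, (∀ k, |x k - muv k| ≤ cm / (r:ℝ)) → ∀ y : Fin r → ℝ,
      ∃ w ∈ S, ∑ k, x k * y k ≤ ∑ k, w k * y k := by
    intro x hx y
    set a : Fin r → ℝ := fun k => |y k| with hadef
    set σ : Equiv.Perm (Fin r) := Tuple.sort (fun k => -a k) with hσdef
    have hmono := Tuple.monotone_sort (fun k => -a k)
    set d : Fin r → ℝ := fun j => a (σ j) with hddef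
    have hd_anti : ∀ i j : Fin r, i ≤ j → d j ≤ d i := by
      intro i j hij
      have h := hmono hij
      simp only [Function.comp_apply] at h
      have : -a (σ i) ≤ -a (σ j) := h
      simp only [hddef]
      linarith
    have hd_nonneg : ∀ j, 0 ≤ d j := fun j => abs_nonneg _
    set i0 : Fin r := ⟨0, hr0⟩ with hi0def
    have hd_top : ∀ k, a k ≤ d i0 := by
      intro k
      have h1 : a k = d (σ⁻¹ k) := by simp [hddef]
      rw [h1]
      exact hd_anti i0 (σ⁻¹ k) (by simp [hi0def, Fin.le_def])
    set ε : Fin r → ℝ := fun k => if y k < 0 then -1 else 1 with hεdef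
    set w : Fin r → ℝ := fun k => ε k * lam (((σ⁻¹ : Equiv.Perm (Fin r)) k : ℕ) + 1) with hwdef
    have hwS : w ∈ S := by
      refine ⟨σ⁻¹, ε, fun k => ?_, rfl⟩
      by_cases h : y k < 0
      · right; simp [hεdef, h]
      · left; simp [hεdef, h]
    refine ⟨w, hwS, ?_⟩
    have hεy : ∀ k, ε k * y k = a k := by
      intro k
      by_cases h : y k < 0
      · simp [hεdef, hadef, h, abs_of_neg h]
      · simp [hεdef, hadef, h, abs_of_nonneg (not_lt.1 h)]
    have hw_sum : ∑ k, w k * y k = ∑ j, lamv j * d j := by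
      have h1 : ∀ k : Fin r, w k * y k = lamv (σ⁻¹ k) * a k := by
        intro k
        rw [hwdef]
        simp only [hlamvdef]
        rw [mul_comm (ε k) _, mul_assoc, hεy k]
      calc ∑ k, w k * y k = ∑ k, lamv (σ⁻¹ k) * a k :=
            Finset.sum_congr rfl (fun k _ => h1 k)
        _ = ∑ j, lamv (σ⁻¹ (σ j)) * a (σ j) := (Equiv.sum_comp σ _).symm
        _ = ∑ j, lamv j * d j := by simp [hddef]
    -- T1
    have hT1 : ∑ k, (x k - muv k) * y k ≤ cm * d i0 := by
      have step : ∀ k, (x k - muv k) * y k ≤ (cm / (r:ℝ)) * a k := by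
        intro k
        calc (x k - muv k) * y k ≤ |(x k - muv k) * y k| := le_abs_self _
          _ = |x k - muv k| * a k := by rw [abs_mul]
          _ ≤ (cm / (r:ℝ)) * a k := mul_le_mul_of_nonneg_right (hx k) (abs_nonneg _)
      have hsuma : ∑ k, a k ≤ (r:ℝ) * d i0 := by
        calc ∑ k, a k ≤ ∑ _k : Fin r, d i0 := Finset.sum_le_sum (fun k _ => hd_top k)
          _ = (r:ℝ) * d i0 := by
              rw [Finset.sum_const, Finset.card_univ, Fintype.card_fin, nsmul_eq_mul]
      calc ∑ k, (x k - muv k) * y k ≤ ∑ k, (cm / (r:ℝ)) * a k :=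
            Finset.sum_le_sum (fun k _ => step k)
        _ = (cm / (r:ℝ)) * ∑ k, a k := (Finset.mul_sum _ _ _).symm
        _ ≤ (cm / (r:ℝ)) * ((r:ℝ) * d i0) :=
            mul_le_mul_of_nonneg_left hsuma (le_of_lt hδpos)
        _ = cm * d i0 := by field_simp
    -- T2
    have hT2 : ∑ k, muv k * y k ≤ ∑ k, muv k * d k := by
      have s1 : ∑ k, muv k * y k ≤ ∑ k, muv k * a k :=
        Finset.sum_le_sum fun k _ =>
          mul_le_mul_of_nonneg_left (le_abs_self _) (hmuv_nonneg k)
      have hmv : Monovary muv d := by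
        intro i j hij
        rcases le_or_gt j i with h | h
        · exact hmuv_anti j i h
        · exact absurd (hd_anti i j h.le) (not_le.2 hij)
      have s2 : ∑ k, muv k * a k ≤ ∑ k, muv k * d k := by
        have h := hmv.sum_smul_comp_perm_le_sum_smul (σ := σ⁻¹)
        simp only [smul_eq_mul] at h
        have heq : ∀ k : Fin r, d (σ⁻¹ k) = a k := by intro k; simp [hddef]
        calc ∑ k, muv k * a k = ∑ k, muv k * d (σ⁻¹ k) := by
              apply Finset.sum_congr rfl; intro k _; rw [heq k]
          _ ≤ ∑ k, muv k * d k := h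
      linarith
    -- T3
    set D : ℕ → ℝ := fun i => if h : 1 ≤ i ∧ i ≤ r then d ⟨i - 1, by omega⟩ else 0 with hDdef
    have hstd : ∀ i : ℕ, ∑ k, stdVec r i k * d k = D i := by
      intro i
      by_cases h : 1 ≤ i ∧ i ≤ r
      · rw [hDdef]
        simp only []
        rw [dif_pos h]
        have hterm : ∀ k : Fin r, stdVec r i k * d k =
            if k = (⟨i - 1, by omega⟩ : Fin r) then d k else 0 := by
          intro k
          unfold stdVec
          by_cases hk : (k : ℕ) + 1 = i
          · rw [if_pos hk, if_pos, one_mul]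
            apply Fin.ext
            simp only []
            omega
          · rw [if_neg hk, if_neg, zero_mul]
            intro hke
            apply hk
            have : (k:ℕ) = i - 1 := by rw [hke]
            omega
        rw [Finset.sum_congr rfl fun k _ => hterm k, Finset.sum_ite_eq' Finset.univ,
          if_pos (Finset.mem_univ _)]
      · rw [hDdef]
        simp only []
        rw [dif_neg h]
        apply Finset.sum_eq_zero
        intro k _
        have hz : stdVec r i k = 0 := by
          unfold stdVec
          rw [if_neg]
          have := k.isLt
          omega
        rw [hz, zero_mul]
    have hroot : ∀ i ∈ Finset.Icc 1 r, ∑ k, simpleRootB r i k * d k = D i - D (i + 1) := by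
      intro i hi
      rw [Finset.mem_Icc] at hi
      have hsplit : ∀ k : Fin r, simpleRootB r i k = stdVec r i k - stdVec r (i + 1) k := by
        intro k
        unfold simpleRootB
        by_cases h : i = r
        · rw [if_pos h, h]
          have hz : stdVec r (r + 1) k = 0 := by
            unfold stdVec
            rw [if_neg]
            have := k.isLt
            omega
          rw [hz, sub_zero]
        · rw [if_neg h]
          rfl
      calc ∑ k, simpleRootB r i k * d k
          = ∑ k, (stdVec r i k * d k - stdVec r (i + 1) k * d k) := by
            apply Finset.sum_congr rfl; intro k _; rw [hsplit k]; ring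
        _ = D i - D (i + 1) := by rw [Finset.sum_sub_distrib, hstd, hstd]
    have hDnn : ∀ i ∈ Finset.Icc 1 r, 0 ≤ D i - D (i + 1) := by
      intro i hi
      rw [Finset.mem_Icc] at hi
      by_cases h : i = r
      · have h1 : D (i + 1) = 0 := by rw [hDdef]; simp only []; rw [dif_neg (by omega)]
        have h2 : 0 ≤ D i := by
          rw [hDdef]; simp only []; rw [dif_pos ⟨hi.1, hi.2⟩]; exact hd_nonneg _
        linarith
      · have h1 : D i = d ⟨i - 1, by omega⟩ := by
          rw [hDdef]; simp only []; rw [dif_pos ⟨hi.1, hi.2⟩]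
        have h2 : D (i + 1) = d ⟨i, by omega⟩ := by
          rw [hDdef]; simp only []; rw [dif_pos ⟨by omega, by omega⟩]
          rfl
        rw [h1, h2]
        have h3 := hd_anti ⟨i - 1, by omega⟩ ⟨i, by omega⟩ (by rw [Fin.le_def]; simp only []; omega)
        linarith
    have htel : ∑ i ∈ Finset.Icc 1 r, (D i - D (i + 1)) = d i0 := by
      rw [icc_telescope_aux]
      have h1 : D 1 = d i0 := by
        rw [hDdef]; simp only []; rw [dif_pos ⟨le_rfl, hr⟩]
      have h2 : D (r + 1) = 0 := by rw [hDdef]; simp only []; rw [dif_neg (by omega)]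
      rw [h1, h2, sub_zero]
    have hT3 : ∑ k, muv k * d k + cm * d i0 ≤ ∑ k, lamv k * d k := by
      have hdiff_sum : ∑ k, lamv k * d k - ∑ k, muv k * d k
          = ∑ i ∈ Finset.Icc 1 r, c i * (D i - D (i + 1)) := by
        rw [← Finset.sum_sub_distrib]
        calc ∑ k, (lamv k * d k - muv k * d k) = ∑ k, (lamv k - muv k) * d k := by
              apply Finset.sum_congr rfl; intro k _; ring
          _ = ∑ k, (∑ i ∈ Finset.Icc 1 r, c i * simpleRootB r i k) * d k := by
              apply Finset.sum_congr rfl; intro k _; rw [hco k]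
          _ = ∑ k, ∑ i ∈ Finset.Icc 1 r, c i * (simpleRootB r i k * d k) := by
              apply Finset.sum_congr rfl; intro k _
              rw [Finset.sum_mul]
              apply Finset.sum_congr rfl; intro i _; ring
          _ = ∑ i ∈ Finset.Icc 1 r, ∑ k, c i * (simpleRootB r i k * d k) := Finset.sum_comm
          _ = ∑ i ∈ Finset.Icc 1 r, c i * (D i - D (i + 1)) := by
              apply Finset.sum_congr rfl; intro i hi
              rw [← Finset.mul_sum, hroot i hi]
      have hge : cm * d i0 ≤ ∑ i ∈ Finset.Icc 1 r, c i * (D i - D (i + 1)) := by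
        calc cm * d i0 = cm * ∑ i ∈ Finset.Icc 1 r, (D i - D (i + 1)) := by rw [htel]
          _ = ∑ i ∈ Finset.Icc 1 r, cm * (D i - D (i + 1)) := Finset.mul_sum _ _ _
          _ ≤ ∑ i ∈ Finset.Icc 1 r, c i * (D i - D (i + 1)) :=
              Finset.sum_le_sum fun i hi =>
                mul_le_mul_of_nonneg_right (hcm_le i hi) (hDnn i hi)
      linarith
    have hsplitxy : ∑ k, x k * y k = ∑ k, muv k * y k + ∑ k, (x k - muv k) * y k := by
      rw [← Finset.sum_add_distrib]
      apply Finset.sum_congr rfl; intro k _; ring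
    rw [hw_sum, hsplitxy]
    linarith
  -- S is finite
  have hSfin : S.Finite := by
    have hsub : S ⊆ Set.range (fun p : Equiv.Perm (Fin r) × (Fin r → Bool) =>
        fun k => (if p.2 k then (1:ℝ) else -1) * lam ((p.1 k : ℕ) + 1)) := by
      rintro w ⟨σ, ε, hε, rfl⟩
      refine ⟨(σ, fun k => if ε k = 1 then true else false), ?_⟩
      funext k
      by_cases h : ε k = 1
      · simp [h]
      · have h2 : ε k = -1 := (hε k).resolve_left h
        have hne1 : (-1:ℝ) ≠ 1 := by norm_num
        simp [h2, hne1]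
    exact Set.Finite.subset (Set.finite_range _) hsub
  -- the ball is contained in the hull
  have hball : Metric.ball muv (cm / (r:ℝ)) ⊆ convexHull ℝ S := by
    intro x hx
    by_contra hxS
    obtain ⟨f, u, hfx, hfb⟩ := geometric_hahn_banach_point_closed
      (convex_convexHull ℝ S) (hSfin.isClosed_convexHull (𝕜 := ℝ)) hxS
    set y : Fin r → ℝ := fun k => -(f (Pi.single k 1)) with hydef
    have hf_eval : ∀ z : Fin r → ℝ, f z = ∑ k, z k * f (Pi.single k 1) := by
      intro z
      conv_lhs => rw [pi_eq_sum_univ z]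
      rw [map_sum]
      apply Finset.sum_congr rfl
      intro k _
      have hsingle : (fun j => if k = j then (1:ℝ) else 0) = Pi.single k 1 := by
        funext j
        rw [Pi.single_apply]
        by_cases h : k = j
        · rw [if_pos h, if_pos h.symm]
        · rw [if_neg h, if_neg (fun hh => h hh.symm)]
      rw [map_smul, smul_eq_mul, hsingle]
    have hxd : ∀ k, |x k - muv k| ≤ cm / (r:ℝ) := by
      intro k
      have h1 : dist (x k) (muv k) ≤ dist x muv := dist_le_pi_dist x muv k
      have h2 : dist x muv < cm / (r:ℝ) := by rwa [Metric.mem_ball] at hx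
      rw [Real.dist_eq] at h1
      linarith
    obtain ⟨w, hwS, hineq⟩ := key x hxd y
    have h1 : ∑ k, x k * y k = -f x := by
      rw [hf_eval x, ← Finset.sum_neg_distrib]
      apply Finset.sum_congr rfl; intro k _
      simp [hydef]
    have h2 : ∑ k, w k * y k = -f w := by
      rw [hf_eval w, ← Finset.sum_neg_distrib]
      apply Finset.sum_congr rfl; intro k _
      simp [hydef]
    have h3 : u < f w := hfb w (subset_convexHull ℝ S hwS)
    rw [h1, h2] at hineq
    linarith
  exact mem_interior.2 ⟨Metric.ball muv (cm / (r:ℝ)), hball, Metric.isOpen_ball,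
    Metric.mem_ball_self hδpos⟩
end
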